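/- arXiv:math/0703880 — 6 statements merged into one kernel-verified Lean document; each statement's English description precedes it below -/
import Mathlib

section
/- Let S be a regular local ring of Krull dimension n ≥ 1 with maximal ideal M′, and let a = (a₁,…,aₙ) be a regular sequence on S with J(a) ⊆ M′². Then M′ⁿ ⊈ J(a); equivalently, the complete intersection A = S/J(a) of dimension zero and embedding dimension n satisfies Mⁿ ≠ 0 for its maximal ideal M, so its exponent is strictly greater than its embedding dimension n. -/
open IsLocalRing Matrix

open RingTheory.Sequence

set_option linter.unusedSectionVars false

namespace WiebeAux

variable {S : Type*} [CommRing S]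


variable {S : Type*} [CommRing S]

lemma smul_top_eq (I : Ideal S) : (I • ⊤ : Submodule S S) = I := by
  apply le_antisymm
  · refine Submodule.smul_le.2 fun r hr n _ => ?_
    simpa [smul_eq_mul] using I.mul_mem_right n hr
  · intro x hx
    simpa using Submodule.smul_mem_smul hx (Submodule.mem_top (x := (1:S)))

lemma ofList_ofFn_span {n : ℕ} (y : Fin n → S) :
    Ideal.ofList (List.ofFn y) = Ideal.span (Set.range y) := by
  unfold Ideal.ofList
  congr 1
  ext x
  simp [List.mem_ofFn]

lemma quot_colon {I : Ideal S} {r : S}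
    (h : IsSMulRegular (S ⧸ (I • ⊤ : Submodule S S)) r) {x : S}
    (hx : x * r ∈ I) : x ∈ I := by
  have hrx : r • x = x * r := by rw [smul_eq_mul, mul_comm]
  have key : r • (Submodule.Quotient.mk x : S ⧸ (I • ⊤ : Submodule S S)) = r • 0 := by
    rw [smul_zero, ← Submodule.Quotient.mk_smul, Submodule.Quotient.mk_eq_zero, hrx, smul_top_eq]
    exact hx
  have := h key
  rwa [Submodule.Quotient.mk_eq_zero, smul_top_eq] at this

open RingTheory.Sequence in
lemma colon_of_append {rs : List S} {r : S}
    (h : IsWeaklyRegular S (rs ++ [r])) {x : S}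
    (hx : x * r ∈ Ideal.ofList rs) : x ∈ Ideal.ofList rs := by
  rw [isWeaklyRegular_append_iff] at h
  have h2 := (isWeaklyRegular_singleton_iff _ r).mp h.2
  exact quot_colon h2 hx

lemma prod_mem_pow (I : Ideal S) {ι : Type*} (t : Finset ι) (f : ι → S)
    (hf : ∀ i ∈ t, f i ∈ I) : (∏ i ∈ t, f i) ∈ I ^ t.card := by
  classical
  induction t using Finset.induction_on with
  | empty => simp [Ideal.one_eq_top]
  | insert a s hx ih =>
    rw [Finset.prod_insert hx, Finset.card_insert_of_notMem hx, pow_succ, mul_comm (I^s.card) I]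
    exact Ideal.mul_mem_mul (hf a (Finset.mem_insert_self a s))
      (ih fun i hi => hf i (Finset.mem_insert_of_mem hi))

lemma det_mem_pow {n : ℕ} (I : Ideal S) (C : Matrix (Fin n) (Fin n) S)
    (hC : ∀ i j, C i j ∈ I) : C.det ∈ I ^ n := by
  rw [Matrix.det_apply]
  refine Ideal.sum_mem _ fun σ _ => ?_
  have : (∏ i, C (σ i) i) ∈ I ^ n := by
    simpa using prod_mem_pow I Finset.univ (fun i => C (σ i) i) (fun i _ => hC _ _)
  rcases Int.units_eq_one_or (Equiv.Perm.sign σ) with h | h <;> rw [h]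
  · simpa using this
  · simpa [Units.neg_smul] using neg_mem this





/-- The set of Koszul (elementary) syzygies of `y`. -/
def kos {n : ℕ} (y : Fin n → S) : Set (Fin n → S) :=
  {v : Fin n → S | ∃ p q, v = y q • (Pi.single p 1 : Fin n → S) - y p • (Pi.single q 1 : Fin n → S)}

/-- Extension by zero in the last coordinate, as a linear map. -/
noncomputable def ext0 (n : ℕ) : (Fin n → S) →ₗ[S] (Fin (n+1) → S) :=
  LinearMap.pi (fun i => Fin.lastCases 0 (fun k => LinearMap.proj k) i)

lemma ext0_apply_castSucc {n : ℕ} (v : Fin n → S) (k : Fin n) :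
    ext0 n v (k.castSucc) = v k := by
  simp [ext0, LinearMap.pi_apply]

lemma ext0_apply_last {n : ℕ} (v : Fin n → S) :
    ext0 n v (Fin.last n) = 0 := by
  simp [ext0, LinearMap.pi_apply]

lemma ext0_single {n : ℕ} (p : Fin n) :
    ext0 n (Pi.single p (1:S)) = Pi.single p.castSucc (1:S) := by
  funext i
  induction i using Fin.lastCases with
  | last =>
    rw [ext0_apply_last]
    rw [Pi.single_eq_of_ne (ne_of_gt (Fin.castSucc_lt_last p))]
  | cast k =>
    rw [ext0_apply_castSucc]
    rcases eq_or_ne k p with rfl | hk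
    · rw [Pi.single_eq_same, Pi.single_eq_same]
    · rw [Pi.single_eq_of_ne hk, Pi.single_eq_of_ne (by simpa [Fin.castSucc_inj] using hk)]

lemma syzygy {n : ℕ} (y : Fin n → S)
    (hy : ∀ (k : Fin n) (x : S), x * y k ∈ Ideal.span (y '' {j | j < k}) →
      x ∈ Ideal.span (y '' {j | j < k}))
    (δ : Fin n → S) (hδ : ∑ j, δ j * y j = 0) :
    δ ∈ Submodule.span S (kos y) := by
  induction n with
  | zero =>
    have : δ = 0 := Subsingleton.elim _ _
    rw [this]; exact zero_mem _
  | succ n IH =>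
    set L := Fin.last n with hL
    set y' : Fin n → S := y ∘ Fin.castSucc with hy'def
    have hsum : (∑ k : Fin n, δ k.castSucc * y' k) + δ L * y L = 0 := by
      have h2 := Fin.sum_univ_castSucc (fun j => δ j * y j)
      rw [hδ] at h2
      exact h2.symm
    have hrange : Ideal.span (y '' {j | j < L}) = Ideal.span (Set.range y') := by
      congr 1
      ext z
      constructor
      · rintro ⟨j, hj, rfl⟩
        obtain ⟨k, rfl⟩ := Fin.exists_castSucc_eq.mpr (ne_of_lt hj)
        exact ⟨k, rfl⟩
      · rintro ⟨k, rfl⟩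
        exact ⟨k.castSucc, Fin.castSucc_lt_last k, rfl⟩
    have hmem : δ L * y L ∈ Ideal.span (y '' {j | j < L}) := by
      have heq : δ L * y L = -∑ k : Fin n, δ k.castSucc * y' k := by
        rw [eq_neg_iff_add_eq_zero, add_comm]
        exact hsum
      rw [heq]
      refine neg_mem (Submodule.sum_mem _ fun k _ => Ideal.mul_mem_left _ _ ?_)
      exact Ideal.subset_span ⟨k.castSucc, Fin.castSucc_lt_last k, rfl⟩
    have hmem' := hy L (δ L) hmem
    rw [hrange] at hmem'
    obtain ⟨e, he⟩ := (Submodule.mem_span_range_iff_exists_fun S).mp hmem'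
    set δ' : Fin n → S := fun k => δ k.castSucc + e k * y L with hδ'def
    have hδ'sum : ∑ k, δ' k * y' k = 0 := by
      have : ∑ k, δ' k * y' k
          = (∑ k : Fin n, δ k.castSucc * y' k) + (∑ k, e k * y' k) * y L := by
        rw [Finset.sum_mul, ← Finset.sum_add_distrib]
        apply Finset.sum_congr rfl
        intro k _
        ring
      rw [this]
      have he' : (∑ k, e k * y' k) = δ L := by
        rw [← he]
        apply Finset.sum_congr rfl
        intro k _
        rw [smul_eq_mul]
      rw [he']
      exact hsum
    have hycol' : ∀ (k : Fin n) (x : S), x * y' k ∈ Ideal.span (y' '' {j | j < k}) →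
        x ∈ Ideal.span (y' '' {j | j < k}) := by
      intro k x hx
      have hsets : y' '' {j : Fin n | j < k} = y '' {j : Fin (n+1) | j < k.castSucc} := by
        ext z
        constructor
        · rintro ⟨j, hj, rfl⟩
          exact ⟨j.castSucc, by simpa [Fin.castSucc_lt_castSucc_iff] using hj, rfl⟩
        · rintro ⟨j, hj, rfl⟩
          have hjne : j ≠ Fin.last n :=
            ne_of_lt (lt_of_lt_of_le hj (Fin.le_last _))
          obtain ⟨j', rfl⟩ := Fin.exists_castSucc_eq.mpr hjne
          exact ⟨j', by simpa [Fin.castSucc_lt_castSucc_iff] using hj, rfl⟩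
      rw [hsets] at hx ⊢
      exact hy k.castSucc x hx
    have hδ'mem := IH y' hycol' δ' hδ'sum
    -- push forward along ext0
    have hext : ext0 n δ' ∈ Submodule.span S (kos y) := by
      have h1 : ext0 n δ' ∈ Submodule.map (ext0 n) (Submodule.span S (kos y')) :=
        Submodule.mem_map_of_mem hδ'mem
      rw [Submodule.map_span] at h1
      refine Submodule.span_le.mpr ?_ h1
      rintro _ ⟨v, ⟨p, q, rfl⟩, rfl⟩
      have : ext0 n (y' q • (Pi.single p 1 : Fin n → S) - y' p • (Pi.single q 1 : Fin n → S))
          = y q.castSucc • (Pi.single p.castSucc 1 : Fin (n+1) → S) - y p.castSucc • (Pi.single q.castSucc 1 : Fin (n+1) → S) := by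
        rw [map_sub, LinearMap.map_smul, LinearMap.map_smul, ext0_single, ext0_single]
        rfl
      rw [this]
      exact Submodule.subset_span ⟨p.castSucc, q.castSucc, rfl⟩
    -- the correction term
    set B : Fin (n+1) → S :=
      ∑ k : Fin n, e k • (y L • (Pi.single k.castSucc 1 : Fin (n+1) → S) - y' k • (Pi.single L 1 : Fin (n+1) → S)) with hBdef
    have hB : B ∈ Submodule.span S (kos y) := by
      refine Submodule.sum_mem _ fun k _ => Submodule.smul_mem _ _ ?_
      exact Submodule.subset_span ⟨k.castSucc, L, rfl⟩
    have hdelta : δ = ext0 n δ' - B := by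
      funext i
      induction i using Fin.lastCases with
      | last =>
        rw [Pi.sub_apply, ext0_apply_last]
        have hBL : B L = -δ L := by
          rw [hBdef, Finset.sum_apply]
          have : ∀ k : Fin n, (e k • (y L • (Pi.single k.castSucc 1 : Fin (n+1) → S) - y' k • (Pi.single L 1 : Fin (n+1) → S))) L
              = -(e k * y' k) := by
            intro k
            rw [Pi.smul_apply, Pi.sub_apply, Pi.smul_apply, Pi.smul_apply]
            rw [Pi.single_eq_of_ne (ne_of_gt (Fin.castSucc_lt_last k)), Pi.single_eq_same]
            simp [smul_eq_mul]
          rw [Finset.sum_congr rfl (fun k _ => this k), Finset.sum_neg_distrib, ← he]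
          simp [smul_eq_mul]
        rw [hBL]
        ring
      | cast k =>
        rw [Pi.sub_apply, ext0_apply_castSucc]
        have hBk : B k.castSucc = e k * y L := by
          rw [hBdef, Finset.sum_apply]
          rw [Finset.sum_eq_single k]
          · rw [Pi.smul_apply, Pi.sub_apply, Pi.smul_apply, Pi.smul_apply]
            rw [Pi.single_eq_same, Pi.single_eq_of_ne (ne_of_lt (Fin.castSucc_lt_last k))]
            simp [smul_eq_mul]
          · intro b _ hbk
            rw [Pi.smul_apply, Pi.sub_apply, Pi.smul_apply, Pi.smul_apply]
            rw [Pi.single_eq_of_ne (by simpa [Fin.castSucc_inj] using hbk.symm),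
              Pi.single_eq_of_ne (ne_of_lt (Fin.castSucc_lt_last k))]
            simp
          · intro hk
            exact absurd (Finset.mem_univ k) hk
        rw [hBk, hδ'def]
        ring
    rw [hdelta]
    exact sub_mem hext hB







lemma adj_cross_mem {n : ℕ} (H : Matrix (Fin n) (Fin n) S) (y : Fin n → S) (i p q : Fin n) :
    y q * H.adjugate p i - y p * H.adjugate q i ∈ Ideal.span ((H *ᵥ y) '' {j | j ≠ i}) := by
  set H' := H.updateRow i (Pi.single p 1) with hH'
  have cram : H'.adjugate *ᵥ (H' *ᵥ y) = H'.det • y := by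
    rw [Matrix.mulVec_mulVec, Matrix.adjugate_mul, Matrix.smul_mulVec, Matrix.one_mulVec]
  have hq := congrFun cram q
  have hdetH' : H'.det = H.adjugate p i := (Matrix.adjugate_apply H p i).symm
  have hupd : H'.updateRow i (Pi.single q 1) = H.updateRow i (Pi.single q 1) := by
    ext a b
    by_cases hai : a = i <;> simp [hH', Matrix.updateRow_apply, hai]
  have hadj : H'.adjugate q i = H.adjugate q i := by
    rw [Matrix.adjugate_apply, Matrix.adjugate_apply, hupd]
  have hval : ∀ j, j ≠ i → (H' *ᵥ y) j = (H *ᵥ y) j := by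
    intro j hj
    show H' j ⬝ᵥ y = H j ⬝ᵥ y
    rw [hH', Matrix.updateRow_ne hj]
  have hival : (H' *ᵥ y) i = y p := by
    show H' i ⬝ᵥ y = y p
    rw [hH', Matrix.updateRow_self, single_dotProduct, one_mul]
  have hexp : (H'.adjugate *ᵥ (H' *ᵥ y)) q
      = (∑ j ∈ Finset.univ.erase i, H'.adjugate q j * (H *ᵥ y) j)
        + H.adjugate q i * y p := by
    show H'.adjugate q ⬝ᵥ (H' *ᵥ y) = _
    rw [dotProduct, ← Finset.sum_erase_add _ _ (Finset.mem_univ i)]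
    congr 1
    · exact Finset.sum_congr rfl fun j hj => by rw [hval j (Finset.ne_of_mem_erase hj)]
    · rw [hival, hadj]
  have hmain : y q * H.adjugate p i - y p * H.adjugate q i
      = ∑ j ∈ Finset.univ.erase i, H'.adjugate q j * (H *ᵥ y) j := by
    have h1 : (H'.det • y) q = H'.det * y q := rfl
    rw [hexp, h1, hdetH'] at hq
    linear_combination -hq
  rw [hmain]
  refine Submodule.sum_mem _ fun j hj => Ideal.mul_mem_left _ _ ?_
  exact Ideal.subset_span ⟨j, Finset.ne_of_mem_erase hj, rfl⟩

lemma det_updateRow_syzygy {n : ℕ} (H : Matrix (Fin n) (Fin n) S) (y : Fin n → S) (i : Fin n)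
    {δ : Fin n → S} (hδ : δ ∈ Submodule.span S (kos y)) :
    (H.updateRow i δ).det ∈ Ideal.span ((H *ᵥ y) '' {j | j ≠ i}) := by
  induction hδ using Submodule.span_induction with
  | mem v hv =>
    obtain ⟨p, q, rfl⟩ := hv
    have hsplit : y q • (Pi.single p 1 : Fin n → S) - y p • (Pi.single q 1 : Fin n → S)
        = y q • (Pi.single p 1 : Fin n → S) + (-(y p)) • (Pi.single q 1 : Fin n → S) := by
      rw [neg_smul, sub_eq_add_neg]
    rw [hsplit, Matrix.det_updateRow_add, Matrix.det_updateRow_smul, Matrix.det_updateRow_smul,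
      ← Matrix.adjugate_apply, ← Matrix.adjugate_apply]
    have := adj_cross_mem H y i p q
    have heq : y q * H.adjugate p i + -(y p) * H.adjugate q i
        = y q * H.adjugate p i - y p * H.adjugate q i := by ring
    rw [heq]
    exact this
  | zero =>
    have h0 : (0 : Fin n → S) = (0:S) • (0 : Fin n → S) := by simp
    rw [h0, Matrix.det_updateRow_smul, zero_mul]
    exact zero_mem _
  | add u v hu hv ihu ihv =>
    rw [Matrix.det_updateRow_add]
    exact add_mem ihu ihv
  | smul c u hu ih =>
    rw [Matrix.det_updateRow_smul]
    exact Ideal.mul_mem_left _ _ ih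

lemma det_sub_det_mem {n : ℕ} (G E : Matrix (Fin n) (Fin n) S) (y : Fin n → S)
    (hGE : G *ᵥ y = E *ᵥ y)
    (hsyz : ∀ δ : Fin n → S, (∑ j, δ j * y j = 0) → δ ∈ Submodule.span S (kos y)) :
    G.det - E.det ∈ Ideal.span (Set.range (E *ᵥ y)) := by
  set F : ℕ → Matrix (Fin n) (Fin n) S :=
    fun k => Matrix.of fun i j => if (i : ℕ) < k then G i j else E i j with hF
  have hFy : ∀ k, (F k) *ᵥ y = E *ᵥ y := by
    intro k
    funext i
    show (F k) i ⬝ᵥ y = (E *ᵥ y) i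
    by_cases hik : (i : ℕ) < k
    · have : (F k) i = G i := by funext j; simp [hF, hik]
      rw [this]
      exact congrFun hGE i
    · have : (F k) i = E i := by funext j; simp [hF, hik]
      rw [this]
      rfl
  have key : ∀ k : ℕ, (F k).det - E.det ∈ Ideal.span (Set.range (E *ᵥ y)) := by
    intro k
    induction k with
    | zero =>
      have : F 0 = E := by ext i j; simp [hF]
      rw [this, sub_self]
      exact zero_mem _
    | succ k ih =>
      by_cases hk : k < n
      · set c : Fin n := ⟨k, hk⟩ with hc
        have hrow : F k c = E c := by funext j; simp [hF, hc]
        have hstep : F (k+1) = (F k).updateRow c (G c) := by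
          ext i j
          rw [Matrix.updateRow_apply]
          by_cases hic : i = c
          · subst hic
            simp [hF, hc, Nat.lt_succ_self]
          · have hik : (i : ℕ) ≠ k := fun hh => hic (Fin.ext (by rw [hh, hc]))
            have : ((i : ℕ) < k + 1) ↔ ((i : ℕ) < k) := by omega
            simp [hF, hic, this]
        set δ : Fin n → S := G c - E c with hδdef
        have hδ : ∑ j, δ j * y j = 0 := by
          have : ∑ j, δ j * y j = (G *ᵥ y) c - (E *ᵥ y) c := by
            show ∑ j, (G c j - E c j) * y j = G c ⬝ᵥ y - E c ⬝ᵥ y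
            rw [dotProduct, dotProduct, ← Finset.sum_sub_distrib]
            exact Finset.sum_congr rfl fun j _ => by ring
          rw [this, hGE, sub_self]
        have hmem := det_updateRow_syzygy (F k) y c (hsyz δ hδ)
        have hGc : G c = δ + E c := by rw [hδdef]; ring
        have hdet1 : (F (k+1)).det = ((F k).updateRow c δ).det + (F k).det := by
          rw [hstep, hGc, Matrix.det_updateRow_add]
          congr 1
          rw [← hrow, Matrix.updateRow_eq_self]
        have hmem' : ((F k).updateRow c δ).det ∈ Ideal.span (Set.range (E *ᵥ y)) := by
          have hsub : ((F k *ᵥ y) '' {j | j ≠ c}) ⊆ Set.range (E *ᵥ y) := by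
            rw [hFy k]
            exact Set.image_subset_range _ _
          exact Ideal.span_le.mpr (hsub.trans Ideal.subset_span) hmem
        rw [hdet1]
        have : ((F k).updateRow c δ).det + (F k).det - E.det
            = ((F k).updateRow c δ).det + ((F k).det - E.det) := by ring
        rw [this]
        exact add_mem hmem' ih
      · have : F (k+1) = F k := by
          ext i j
          have h1 : (i : ℕ) < k := lt_of_lt_of_le i.isLt (le_of_not_gt hk)
          simp [hF, h1, h1.trans (Nat.lt_succ_self k)]
        rw [this]
        exact ih
  have hFn : F n = G := by
    ext i j
    simp [hF, i.isLt]
  have := key n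
  rwa [hFn] at this


variable [IsNoetherianRing S] [IsLocalRing S]

lemma isRegular_comp_perm {n : ℕ} {y : Fin n → S} (h : IsRegular S (List.ofFn y))
    (σ : Equiv.Perm (Fin n)) : IsRegular S (List.ofFn (y ∘ σ)) :=
  IsLocalRing.isRegular_of_perm h (Equiv.Perm.ofFn_comp_perm σ y).symm

lemma ofFn_update_last {m : ℕ} (g : Fin (m+1) → S) (z : S) :
    List.ofFn (Function.update g (Fin.last m) z)
      = (List.ofFn (g ∘ Fin.castSucc)) ++ [z] := by
  rw [List.ofFn_succ' (Function.update g (Fin.last m) z), List.concat_eq_append]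
  congr 1
  · congr 1
    funext i
    exact Function.update_of_ne (ne_of_lt (Fin.castSucc_lt_last i)) _ _
  · simp

lemma update_pow_isRegular {n : ℕ} {w : Fin n → S} (h : IsRegular S (List.ofFn w))
    (c : Fin n) {N : ℕ} (hN : 1 ≤ N) :
    IsRegular S (List.ofFn (Function.update w c (w c ^ N))) := by
  cases n with
  | zero => exact c.elim0
  | succ m =>
    set σ : Equiv.Perm (Fin (m+1)) := Equiv.swap c (Fin.last m) with hσ
    have h1 : IsRegular S (List.ofFn (w ∘ σ)) := isRegular_comp_perm h σ
    have hsplit : List.ofFn (w ∘ σ) = (List.ofFn (w ∘ σ ∘ Fin.castSucc)) ++ [w c] := by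
      rw [List.ofFn_succ' (w ∘ σ), List.concat_eq_append]
      congr 2
      simp [hσ, Equiv.swap_apply_right]
    have hw1 : IsWeaklyRegular S ((List.ofFn (w ∘ σ ∘ Fin.castSucc)) ++ [w c]) := by
      rw [← hsplit]; exact h1.toIsWeaklyRegular
    rw [isWeaklyRegular_append_iff] at hw1
    have hw2 := (isWeaklyRegular_singleton_iff _ _).mp hw1.2
    have hw3 : IsWeaklyRegular S ((List.ofFn (w ∘ σ ∘ Fin.castSucc)) ++ [w c ^ N]) := by
      rw [isWeaklyRegular_append_iff]
      exact ⟨hw1.1, (isWeaklyRegular_singleton_iff _ _).mpr (hw2.pow N)⟩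
    -- the updated function composed with σ
    have hcomp : (Function.update w c (w c ^ N)) ∘ σ
        = Function.update (w ∘ σ) (Fin.last m) (w c ^ N) := by
      rw [Function.update_comp_equiv]
      congr 1
      simp [hσ]
    have hlist : List.ofFn ((Function.update w c (w c ^ N)) ∘ σ)
        = (List.ofFn (w ∘ σ ∘ Fin.castSucc)) ++ [w c ^ N] := by
      rw [hcomp, ofFn_update_last]
      rfl
    have hle : Ideal.ofList (List.ofFn ((Function.update w c (w c ^ N)) ∘ σ))
        ≤ Ideal.ofList (List.ofFn w) := by
      rw [ofList_ofFn_span, ofList_ofFn_span, Set.range_comp, Equiv.range_eq_univ, Set.image_univ]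
      rw [Ideal.span_le]
      rintro _ ⟨i, -, rfl⟩
      by_cases hic : i = c
      · subst hic
        rw [Function.update_self]
        exact Ideal.pow_mem_of_mem (Ideal.span (Set.range w)) (Ideal.subset_span ⟨i, rfl⟩) N hN
      · rw [Function.update_of_ne hic]
        exact Ideal.subset_span ⟨i, rfl⟩
    have hreg' : IsRegular S (List.ofFn ((Function.update w c (w c ^ N)) ∘ σ)) :=
      { toIsWeaklyRegular := by rw [hlist]; exact hw3
        top_ne_smul := fun heq => h.top_ne_smul
          (le_antisymm (le_trans heq.le (Submodule.smul_mono_left hle)) le_top) }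
    have := isRegular_comp_perm hreg' σ
    have hσσ : ((Function.update w c (w c ^ N)) ∘ σ) ∘ σ = Function.update w c (w c ^ N) := by
      funext i
      rw [Function.comp_apply, Function.comp_apply, hσ, Equiv.swap_apply_self]
    rwa [hσσ] at this

lemma pow_isRegular {n : ℕ} {y : Fin n → S} (h : IsRegular S (List.ofFn y))
    (N : Fin n → ℕ) (hN : ∀ i, 1 ≤ N i) :
    IsRegular S (List.ofFn fun i => y i ^ N i) := by
  have key : ∀ k : ℕ, IsRegular S (List.ofFn fun i : Fin n => y i ^ (if (i : ℕ) < k then N i else 1)) := by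
    intro k
    induction k with
    | zero => simpa [pow_one] using h
    | succ k ih =>
      by_cases hk : k < n
      · have := update_pow_isRegular ih ⟨k, hk⟩ (hN ⟨k, hk⟩)
        have heq : Function.update (fun i : Fin n => y i ^ (if (i : ℕ) < k then N i else 1)) ⟨k, hk⟩
            ((fun i : Fin n => y i ^ (if (i : ℕ) < k then N i else 1)) ⟨k, hk⟩ ^ (N ⟨k, hk⟩))
            = fun i : Fin n => y i ^ (if (i : ℕ) < k + 1 then N i else 1) := by
          funext i
          by_cases hic : i = (⟨k, hk⟩ : Fin n)
          · subst hic
            simp [Function.update_self, pow_one]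
          · rw [Function.update_of_ne hic]
            have : ((i : ℕ) < k + 1) ↔ ((i : ℕ) < k) := by
              rw [Nat.lt_succ_iff_lt_or_eq]
              refine ⟨fun h' => h'.resolve_right fun he => hic (Fin.ext he), Or.inl⟩
            rw [if_congr this rfl rfl]
        rwa [heq] at this
      · have heq : (fun i : Fin n => y i ^ (if (i : ℕ) < k + 1 then N i else 1))
            = fun i : Fin n => y i ^ (if (i : ℕ) < k then N i else 1) := by
          funext i
          have h1 : (i : ℕ) < k := lt_of_lt_of_le i.isLt (le_of_not_gt hk)
          simp [h1, h1.trans (Nat.lt_succ_self k)]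
        rw [heq]
        exact ih
  have := key n
  have heq : (fun i : Fin n => y i ^ (if (i : ℕ) < n then N i else 1)) = fun i => y i ^ N i := by
    funext i
    simp [i.isLt]
  rwa [heq] at this

lemma colon_pow {n : ℕ} {y : Fin (n+1) → S} (h : IsRegular S (List.ofFn y))
    {N : Fin (n+1) → ℕ} (hN : ∀ i, 1 ≤ N i) (j : Fin (n+1)) {x : S}
    (hx : x * (y j ^ N j) ∈ Ideal.span ((fun i => y i ^ N i) '' {i | i ≠ j})) :
    x ∈ Ideal.span ((fun i => y i ^ N i) '' {i | i ≠ j}) := by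
  set g : Fin (n+1) → S := fun i => y i ^ N i with hg
  have hreg : IsRegular S (List.ofFn g) := pow_isRegular h N hN
  set σ : Equiv.Perm (Fin (n+1)) := Equiv.swap j (Fin.last n) with hσ
  have h1 : IsRegular S (List.ofFn (g ∘ σ)) := isRegular_comp_perm hreg σ
  have hsplit : List.ofFn (g ∘ σ) = (List.ofFn (g ∘ σ ∘ Fin.castSucc)) ++ [g j] := by
    rw [List.ofFn_succ' (g ∘ σ), List.concat_eq_append]
    congr 2
    simp [hσ, Equiv.swap_apply_right]
  have hset : Ideal.ofList (List.ofFn (g ∘ σ ∘ Fin.castSucc)) = Ideal.span (g '' {i | i ≠ j}) := by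
    rw [ofList_ofFn_span]
    congr 1
    ext z
    constructor
    · rintro ⟨k, rfl⟩
      refine ⟨σ (Fin.castSucc k), fun hc => ?_, rfl⟩
      have : σ (Fin.castSucc k) = σ (Fin.last n) := by
        rw [hc, hσ, Equiv.swap_apply_right]
      exact absurd (σ.injective this) (ne_of_lt (Fin.castSucc_lt_last k))
    · rintro ⟨i, hi, rfl⟩
      have hne : σ i ≠ Fin.last n := by
        intro hc
        apply hi
        have : σ (σ i) = σ (Fin.last n) := by rw [hc]
        rwa [Equiv.swap_apply_self, hσ, Equiv.swap_apply_right] at this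
      obtain ⟨k, hk⟩ := Fin.exists_castSucc_eq.mpr hne
      exact ⟨k, by simp [Function.comp, hk, Equiv.swap_apply_self, hσ]⟩
  have hw : IsWeaklyRegular S ((List.ofFn (g ∘ σ ∘ Fin.castSucc)) ++ [g j]) := by
    rw [← hsplit]; exact h1.toIsWeaklyRegular
  have := colon_of_append hw (x := x) (by rw [hset]; exact hx)
  rwa [hset] at this


lemma prod_pow_not_mem {n : ℕ} {y : Fin (n+1) → S} (h : IsRegular S (List.ofFn y))
    (hy : ∀ i, y i ∈ maximalIdeal S) :
    ∀ (k : ℕ) (β N : Fin (n+1) → ℕ), (∑ i, β i) = k → (∀ i, β i < N i) →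
      (∏ i, y i ^ β i) ∉ Ideal.span (Set.range fun i => y i ^ N i) := by
  intro k
  induction k using Nat.strong_induction_on with
  | _ k ih =>
    intro β N hsum hβN hmem
    by_cases h0 : ∀ i, β i = 0
    · have hone : (∏ i, y i ^ β i) = 1 := by
        apply Finset.prod_eq_one
        intro i _
        rw [h0 i, pow_zero]
      rw [hone] at hmem
      have hle : Ideal.span (Set.range fun i => y i ^ N i) ≤ maximalIdeal S := by
        rw [Ideal.span_le]
        rintro _ ⟨i, rfl⟩
        exact Ideal.pow_mem_of_mem _ (hy i) _ (lt_of_le_of_lt (Nat.zero_le _) (hβN i))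
      exact (Ideal.ne_top_iff_one _).mp (IsLocalRing.maximalIdeal.isMaximal S).ne_top (hle hmem)
    · push_neg at h0
      obtain ⟨j, hj⟩ := h0
      obtain ⟨c, hc⟩ := (Submodule.mem_span_range_iff_exists_fun S).mp hmem
      set g : Fin (n+1) → S := fun i => y i ^ N i with hg
      set x' : S := ∏ i ∈ Finset.univ.erase j, y i ^ β i with hx'
      have hprod : y j ^ β j * x' = ∏ i, y i ^ β i :=
        Finset.mul_prod_erase Finset.univ (fun i => y i ^ β i) (Finset.mem_univ j)
      have hpowsplit : y j ^ β j * y j ^ (N j - β j) = y j ^ N j := by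
        rw [← pow_add]
        congr 1
        have := hβN j
        omega
      have key : y j ^ β j * (x' - c j * y j ^ (N j - β j))
          ∈ Ideal.span (g '' {i | i ≠ j}) := by
        have expand : y j ^ β j * (x' - c j * y j ^ (N j - β j))
            = (∏ i, y i ^ β i) - c j * y j ^ N j := by
          rw [mul_sub, hprod, ← hpowsplit]; ring
        rw [expand, ← hc]
        have hsplitsum : (∑ i, c i • g i) = (∑ i ∈ Finset.univ.erase j, c i • g i) + c j • g j :=
          (Finset.sum_erase_add _ _ (Finset.mem_univ j)).symm
        rw [hsplitsum]
        have : (∑ i ∈ Finset.univ.erase j, c i • g i) + c j • g j - c j * y j ^ N j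
            = ∑ i ∈ Finset.univ.erase j, c i • g i := by
          rw [smul_eq_mul]; ring_nf; simp [hg]
        rw [this]
        refine Submodule.sum_mem _ fun i hi => Submodule.smul_mem _ _ ?_
        exact Ideal.subset_span ⟨i, Finset.ne_of_mem_erase hi, rfl⟩
      -- colon with updated exponents
      have hNup : ∀ i, 1 ≤ Function.update N j (β j) i := by
        intro i
        by_cases hij : i = j
        · subst hij; rw [Function.update_self]; omega
        · rw [Function.update_of_ne hij]; have := hβN i; omega
      have hsets : ((fun i => y i ^ (Function.update N j (β j)) i) '' {i | i ≠ j})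
          = g '' {i | i ≠ j} := by
        apply Set.image_congr
        intro i hi
        rw [Function.update_of_ne hi]
      have hcol : x' - c j * y j ^ (N j - β j) ∈ Ideal.span (g '' {i | i ≠ j}) := by
        have := colon_pow h hNup j (x := x' - c j * y j ^ (N j - β j)) ?_
        · rwa [hsets] at this
        · rw [hsets, Function.update_self, mul_comm]
          exact key
      have hx'mem : x' ∈ Ideal.span (Set.range fun i => y i ^ (Function.update N j (N j - β j)) i) := by
        have hxeq : x' = (x' - c j * y j ^ (N j - β j)) + c j * y j ^ (N j - β j) := by ring
        rw [hxeq]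
        refine Submodule.add_mem _ ?_ ?_
        · refine Ideal.span_le.mpr ?_ hcol
          rintro _ ⟨i, hi, rfl⟩
          refine Ideal.subset_span ⟨i, ?_⟩
          show y i ^ Function.update N j (N j - β j) i = _
          rw [Function.update_of_ne hi]
        · refine Ideal.mul_mem_left _ _ (Ideal.subset_span ⟨j, ?_⟩)
          show y j ^ Function.update N j (N j - β j) j = _
          rw [Function.update_self]
      -- apply induction hypothesis
      have hβ' : ∀ i, (Function.update β j 0) i < (Function.update N j (N j - β j)) i := by
        intro i
        by_cases hij : i = j
        · subst hij; rw [Function.update_self, Function.update_self]; have := hβN i; omega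
        · rw [Function.update_of_ne hij, Function.update_of_ne hij]; exact hβN i
      have hsum0 : ∑ i, β i = β j + ∑ i ∈ Finset.univ.erase j, β i :=
        (Finset.add_sum_erase _ _ (Finset.mem_univ j)).symm
      have hsum' : ∑ i, (Function.update β j 0) i = ∑ i ∈ Finset.univ.erase j, β i := by
        rw [Finset.sum_update_of_mem (Finset.mem_univ j)]
        rw [zero_add, Finset.sdiff_singleton_eq_erase]
      have hprod' : ∏ i, y i ^ (Function.update β j 0) i = x' := by
        rw [← Finset.mul_prod_erase _ _ (Finset.mem_univ j), Function.update_self, pow_zero, one_mul]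
        apply Finset.prod_congr rfl
        intro i hi
        rw [Function.update_of_ne (Finset.ne_of_mem_erase hi)]
      refine ih (∑ i ∈ Finset.univ.erase j, β i) ?_ _ _ hsum'  hβ' ?_
      · omega
      · rw [hprod']
        exact hx'mem

-- prefix colon property from a weakly regular sequence
lemma prefix_colon {n : ℕ} {y : Fin n → S} (h : IsWeaklyRegular S (List.ofFn y)) :
    ∀ (k : Fin n) (x : S), x * y k ∈ Ideal.span (y '' {j | j < k}) →
      x ∈ Ideal.span (y '' {j | j < k}) := by
  intro k x hx
  have hlen : (List.ofFn y).length = n := List.length_ofFn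
  have h2 := (isWeaklyRegular_iff_Fin S (List.ofFn y)).mp h ⟨(k : ℕ), by rw [hlen]; exact k.isLt⟩
  have hideal : Ideal.ofList ((List.ofFn y).take (k : ℕ)) = Ideal.span (y '' {j | j < k}) := by
    unfold Ideal.ofList
    congr 1
    ext z
    constructor
    · intro hz
      rw [Set.mem_setOf_eq, List.mem_take_iff_getElem] at hz
      obtain ⟨i, hi, hiz⟩ := hz
      rw [List.getElem_ofFn] at hiz
      have hik : i < (k : ℕ) := lt_of_lt_of_le hi inf_le_left
      have hin : i < n := by rw [hlen] at hi; exact lt_of_lt_of_le hi inf_le_right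
      exact ⟨⟨i, hin⟩, hik, hiz⟩
    · rintro ⟨j, hj, rfl⟩
      rw [Set.mem_setOf_eq, List.mem_take_iff_getElem]
      refine ⟨(j : ℕ), ?_, ?_⟩
      · rw [hlen]
        exact lt_inf_iff.mpr ⟨hj, j.isLt⟩
      · rw [List.getElem_ofFn]
  have hel : (List.ofFn y)[(⟨(k : ℕ), by rw [hlen]; exact k.isLt⟩ : Fin (List.ofFn y).length)] = y k := by
    simp [Fin.getElem_fin, List.getElem_ofFn]
  rw [hel, hideal] at h2
  exact quot_colon h2 hx

lemma mem_mul_span {n : ℕ} {I : Ideal S} {y : Fin n → S} {x : S}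
    (hx : x ∈ I * Ideal.span (Set.range y)) :
    ∃ c : Fin n → S, (∀ j, c j ∈ I) ∧ x = ∑ j, c j * y j := by
  refine Submodule.mul_induction_on hx ?_ ?_
  · intro m hm v hv
    obtain ⟨t, ht⟩ := (Submodule.mem_span_range_iff_exists_fun S).mp hv
    refine ⟨fun j => m * t j, fun j => I.mul_mem_right _ hm, ?_⟩
    rw [← ht, Finset.mul_sum]
    exact Finset.sum_congr rfl fun j _ => by rw [smul_eq_mul]; ring
  · rintro u v ⟨c, hc, rfl⟩ ⟨d, hd, rfl⟩
    exact ⟨fun j => c j + d j, fun j => I.add_mem (hc j) (hd j),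
      by rw [← Finset.sum_add_distrib]; exact Finset.sum_congr rfl fun j _ => by ring⟩


end WiebeAux

open WiebeAux

/-- **Corollary 1.5.** If `S` is a regular local ring of dimension `n ≥ 1` with maximal ideal
`M′` and `a` is a regular sequence of length `n` with `J(a) ⊆ M′²`, then `M′ⁿ ⊈ J(a)`;
i.e. the zero-dimensional complete intersection `S/J(a)` of embedding dimension `n` has exponent
strictly greater than `n`. -/
theorem stmt_2 {S : Type*} [CommRing S] [IsNoetherianRing S] [IsLocalRing S]
    {n : ℕ} (hn : 1 ≤ n) (hdim : ringKrullDim S = n)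
    (hregS : ∃ y : Fin n → S, RingTheory.Sequence.IsRegular S (List.ofFn y) ∧
      Ideal.span (Set.range y) = maximalIdeal S)
    (a : Fin n → S)
    (hreg : RingTheory.Sequence.IsRegular S (List.ofFn a))
    (ha : Ideal.span (Set.range a) ≤ (maximalIdeal S) ^ 2) :
    ¬ (maximalIdeal S) ^ n ≤ Ideal.span (Set.range a) := by
  intro hcon
  obtain ⟨y, hyreg, hyspan⟩ := hregS
  have hymem : ∀ i, y i ∈ maximalIdeal S := fun i =>
    hyspan ▸ Ideal.subset_span ⟨i, rfl⟩
  -- write each a i as combination of y with coefficients in the maximal ideal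
  have hamem : ∀ i, a i ∈ (maximalIdeal S) * Ideal.span (Set.range y) := by
    intro i
    rw [hyspan, ← pow_two]
    exact ha (Ideal.subset_span ⟨i, rfl⟩)
  choose c hcmem hceq using fun i => mem_mul_span (hamem i)
  set C : Matrix (Fin n) (Fin n) S := Matrix.of c with hC
  have hCy : C *ᵥ y = a := by
    funext i
    show ∑ j, c i j * y j = a i
    exact (hceq i).symm
  -- b i = y i ^ n lies in (a)
  set b : Fin n → S := fun i => y i ^ n with hb
  have hbmem : ∀ i, b i ∈ Ideal.span (Set.range a) := by
    intro i
    exact hcon (Ideal.pow_mem_pow (hymem i) n)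
  choose d hdeq using fun i => (Submodule.mem_span_range_iff_exists_fun S).mp (hbmem i)
  set D : Matrix (Fin n) (Fin n) S := Matrix.of d with hD
  have hDa : D *ᵥ a = b := by
    funext i
    show ∑ j, d i j * a j = b i
    rw [← hdeq i]
    exact Finset.sum_congr rfl fun j _ => by rw [smul_eq_mul]
  set G : Matrix (Fin n) (Fin n) S := D * C with hG
  have hGy : G *ᵥ y = b := by
    rw [hG, ← Matrix.mulVec_mulVec, hCy, hDa]
  set E : Matrix (Fin n) (Fin n) S := Matrix.diagonal (fun i => y i ^ (n-1)) with hE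
  have hEy : E *ᵥ y = b := by
    funext i
    show Matrix.diagonal (fun i => y i ^ (n-1)) i ⬝ᵥ y = y i ^ n
    rw [diagonal_dotProduct, ← pow_succ]
    congr 1
    omega
  -- det C ∈ M'^n ⊆ (a)
  have hdetC : C.det ∈ Ideal.span (Set.range a) := by
    refine hcon ?_
    exact det_mem_pow (maximalIdeal S) C (fun i j => hcmem i j)
  -- det G ∈ (b)
  have hdetD_a : ∀ j, D.det * a j ∈ Ideal.span (Set.range b) := by
    intro j
    have cram : D.adjugate *ᵥ (D *ᵥ a) = D.det • a := by
      rw [Matrix.mulVec_mulVec, Matrix.adjugate_mul, Matrix.smul_mulVec,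
        Matrix.one_mulVec]
    rw [hDa] at cram
    have hcj := congrFun cram j
    have h3 : (D.det • a) j = D.det * a j := rfl
    have hj : D.det * a j = ∑ k, D.adjugate j k * b k := by
      rw [← h3, ← hcj]; rfl
    rw [hj]
    exact Submodule.sum_mem _ fun k _ =>
      Ideal.mul_mem_left _ _ (Ideal.subset_span ⟨k, rfl⟩)
  have hdetG : G.det ∈ Ideal.span (Set.range b) := by
    rw [hG, Matrix.det_mul]
    obtain ⟨t, ht⟩ := (Submodule.mem_span_range_iff_exists_fun S).mp hdetC
    rw [← ht, Finset.mul_sum]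
    refine Submodule.sum_mem _ fun j _ => ?_
    have : D.det * (t j • a j) = t j * (D.det * a j) := by
      rw [smul_eq_mul]; ring
    rw [this]
    exact Ideal.mul_mem_left _ _ (hdetD_a j)
  -- det G - det E ∈ (b)
  have hsyz : ∀ δ : Fin n → S, (∑ j, δ j * y j = 0) → δ ∈ Submodule.span S (kos y) :=
    fun δ hδ => syzygy y (prefix_colon hyreg.toIsWeaklyRegular) δ hδ
  have hsub : G.det - E.det ∈ Ideal.span (Set.range b) := by
    have := det_sub_det_mem G E y (by rw [hGy, hEy]) hsyz
    rwa [hEy] at this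
  have hdetE : E.det ∈ Ideal.span (Set.range b) := by
    have : E.det = G.det - (G.det - E.det) := by ring
    rw [this]
    exact sub_mem hdetG hsub
  -- contradiction with the monomial lemma
  obtain ⟨m, rfl⟩ : ∃ m, n = m + 1 := ⟨n - 1, by omega⟩
  have hdetEval : E.det = ∏ i, y i ^ (m + 1 - 1) := by
    rw [hE, Matrix.det_diagonal]
  have := prod_pow_not_mem hyreg hymem (∑ i, (m + 1 - 1))
    (fun _ => m + 1 - 1) (fun _ => m + 1) rfl (fun i => by show m + 1 - 1 < m + 1; omega)
  apply this
  rw [← hdetEval]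
  exact hdetE
end

section
/- Let A be a Noetherian local ring whose maximal ideal M is generated by two elements x, y. If x·y = 0 and xA ∩ yA ≠ 0, then A is a complete intersection of dimension zero; concretely, there exists a 2×2 matrix ψ over A with (x, y)·ψ = (0, 0) and det(ψ) ≠ 0 (an (x,y)-Wiebe matrix). -/
open IsLocalRing Matrix

/-- **Proposition 2.14.** Let `A` be a Noetherian local ring whose maximal ideal is generated
by two elements `x, y`. If `xy = 0` and `xA ∩ yA ≠ 0`, then `A` is a complete intersection of
dimension zero: there is a `2 × 2` matrix `ψ` with `(x,y)·ψ = (0,0)` and `det(ψ) ≠ 0`. -/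
theorem stmt_7 {A : Type*} [CommRing A] [IsNoetherianRing A] [IsLocalRing A]
    (x y : A) (hxy : Ideal.span {x, y} = maximalIdeal A)
    (hmul : x * y = 0)
    (hcap : Ideal.span {x} ⊓ Ideal.span {y} ≠ ⊥) :
    ∃ ψ : Matrix (Fin 2) (Fin 2) A, ![x, y] ᵥ* ψ = 0 ∧ ψ.det ≠ 0 := by
  obtain ⟨z, hz, hz0⟩ := Submodule.exists_mem_ne_zero_of_ne_bot hcap
  obtain ⟨hzx, hzy⟩ := Submodule.mem_inf.mp hz
  obtain ⟨a, ha⟩ := Ideal.mem_span_singleton'.mp hzx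
  obtain ⟨b, hb⟩ := Ideal.mem_span_singleton'.mp hzy
  refine ⟨!![y, a; 0, -b], ?_, ?_⟩
  · funext j
    fin_cases j <;> simp [vecMul, dotProduct, Fin.sum_univ_two] <;> ring_nf
    · simpa [mul_comm] using hmul
    · rw [mul_comm x a, mul_comm y b, ha, hb]; ring
  · simp only [det_fin_two_of]
    intro h
    apply hz0
    rw [← hb]
    linear_combination -h
end

section
/- Let S be a regular local ring of Krull dimension two with maximal ideal M′. Let Q be an ideal of S generated by a regular sequence of length two (a parameter ideal) with Q ⊆ M′². Then for every x′ ∈ M′ \ M′² there exist z′ ∈ M′ and g′ ∈ M′² such that Q is generated by the two elements x′·z′ and g′. -/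
open IsLocalRing Matrix

-- divisibility is total in a Noetherian ring where every nonunit lies in a principal ideal (t)
-- with ⨅ (t)^n = ⊥
lemma aux_dvd_total {R : Type*} [CommRing R] (t : R)
    (hmax : ∀ r : R, ¬IsUnit r → r ∈ Ideal.span {t})
    (hKrull : ⨅ n : ℕ, Ideal.span ({t} : Set R) ^ n = ⊥)
    (a b : R) : a ∣ b ∨ b ∣ a := by
  classical
  have key : ∀ c : R, c ≠ 0 → ∃ (n : ℕ) (u : R), IsUnit u ∧ c = u * t ^ n := by
    intro c hc
    have h1 : ¬ (∀ n : ℕ, c ∈ Ideal.span ({t} : Set R) ^ n) := by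
      intro h
      apply hc
      have : c ∈ (⊥ : Ideal R) := by
        rw [← hKrull]; exact Ideal.mem_iInf.mpr h
      simpa using this
    push_neg at h1
    obtain ⟨N, hN⟩ := h1
    have hP0 : c ∈ Ideal.span ({t} : Set R) ^ 0 := by simp
    let n := Nat.findGreatest (fun n => c ∈ Ideal.span ({t} : Set R) ^ n) N
    have hPn : c ∈ Ideal.span ({t} : Set R) ^ n :=
      Nat.findGreatest_spec (P := fun k => c ∈ Ideal.span ({t} : Set R) ^ k)
        (Nat.zero_le N) hP0
    have hnN : n ≤ N := Nat.findGreatest_le N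
    have hnltN : n < N := lt_of_le_of_ne hnN (by intro h; exact hN (h ▸ hPn))
    have hPn1 : c ∉ Ideal.span ({t} : Set R) ^ (n + 1) :=
      Nat.findGreatest_is_greatest (P := fun k => c ∈ Ideal.span ({t} : Set R) ^ k)
        (Nat.lt_succ_self n) hnltN
    have hmem : c ∈ Ideal.span ({t ^ n} : Set R) := by
      rw [← Ideal.span_singleton_pow]; exact hPn
    obtain ⟨u, hu⟩ := Ideal.mem_span_singleton'.mp hmem
    refine ⟨n, u, ?_, hu.symm⟩
    by_contra hu'
    obtain ⟨d, hd⟩ := Ideal.mem_span_singleton'.mp (hmax u hu')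
    apply hPn1
    have hc2 : c = d * t ^ (n + 1) := by rw [← hu, ← hd]; ring
    rw [Ideal.span_singleton_pow]
    exact hc2 ▸ Ideal.mem_span_singleton'.mpr ⟨d, rfl⟩
  rcases eq_or_ne a 0 with rfl | ha
  · right; exact dvd_zero b
  rcases eq_or_ne b 0 with rfl | hb
  · left; exact dvd_zero a
  obtain ⟨n, u, hu, rfl⟩ := key a ha
  obtain ⟨m, v, hv, rfl⟩ := key b hb
  obtain ⟨u', hu'⟩ := isUnit_iff_exists_inv.mp hu
  obtain ⟨v', hv'⟩ := isUnit_iff_exists_inv.mp hv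
  rcases le_total n m with h | h
  · left
    obtain ⟨k, rfl⟩ := Nat.exists_eq_add_of_le h
    exact ⟨u' * v * t ^ k, by rw [pow_add]; linear_combination (-(v * t^n * t^k)) * hu'⟩
  · right
    obtain ⟨k, rfl⟩ := Nat.exists_eq_add_of_le h
    exact ⟨v' * u * t ^ k, by rw [pow_add]; linear_combination (-(u * t^m * t^k)) * hv'⟩

lemma span_pair_sub {S : Type*} [CommRing S] (q₁ q₂ a w : S) (h : w = q₁ - a * q₂) :
    Ideal.span ({q₁, q₂} : Set S) = Ideal.span {w, q₂} := by
  apply le_antisymm <;> rw [Ideal.span_le, Set.insert_subset_iff, Set.singleton_subset_iff]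
  · exact ⟨Ideal.mem_span_pair.mpr ⟨1, a, by rw [h]; ring⟩,
      Ideal.mem_span_pair.mpr ⟨0, 1, by ring⟩⟩
  · exact ⟨Ideal.mem_span_pair.mpr ⟨1, -a, by rw [h]; ring⟩,
      Ideal.mem_span_pair.mpr ⟨0, 1, by ring⟩⟩

-- key step: given q₁ ≡ a * q₂ mod (x'), produce the conclusion
lemma key_step {S : Type*} [CommRing S] [IsLocalRing S] (x' q₁ q₂ : S)
    (hx'2 : x' ∉ (maximalIdeal S) ^ 2)
    (hq₁ : q₁ ∈ (maximalIdeal S) ^ 2) (hq₂ : q₂ ∈ (maximalIdeal S) ^ 2)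
    (h : ∃ a z, q₁ = a * q₂ + x' * z) :
    ∃ z' ∈ maximalIdeal S, ∃ g' ∈ (maximalIdeal S) ^ 2,
      Ideal.span ({q₁, q₂} : Set S) = Ideal.span {x' * z', g'} := by
  obtain ⟨a, z, hz⟩ := h
  refine ⟨z, ?_, q₂, hq₂, span_pair_sub q₁ q₂ a (x' * z) (by rw [hz]; ring)⟩
  by_contra hzM
  have hzu : IsUnit z := by
    by_contra h
    exact hzM ((IsLocalRing.mem_maximalIdeal z).mpr (mem_nonunits_iff.mpr h))
  obtain ⟨w, hw⟩ := isUnit_iff_exists_inv.mp hzu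
  apply hx'2
  have hmem : x' * z ∈ (maximalIdeal S) ^ 2 := by
    have : x' * z = q₁ - a * q₂ := by rw [hz]; ring
    rw [this]
    exact sub_mem hq₁ (Ideal.mul_mem_left _ _ hq₂)
  have : x' = x' * z * w := by rw [mul_assoc, hw, mul_one]
  rw [this]
  exact Ideal.mul_mem_right _ _ hmem

/-- **Corollary 2.16.** Let `S` be a regular local ring of Krull dimension two with maximal
ideal `M′`, and let `Q ⊆ M′²` be an ideal generated by a regular sequence of length two.
Then for every `x′ ∈ M′ \ M′²` there are `z′ ∈ M′` and `g′ ∈ M′²` such that `Q = (x′z′, g′)`. -/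
theorem stmt_9 {S : Type*} [CommRing S] [IsNoetherianRing S] [IsLocalRing S]
    (hdim : ringKrullDim S = 2)
    (hregS : ∃ y : Fin 2 → S, RingTheory.Sequence.IsRegular S (List.ofFn y) ∧
      Ideal.span (Set.range y) = maximalIdeal S)
    (Q : Ideal S) (q₁ q₂ : S)
    (hQ : Q = Ideal.span {q₁, q₂})
    (hreg : RingTheory.Sequence.IsRegular S [q₁, q₂])
    (hQM : Q ≤ (maximalIdeal S) ^ 2) :
    ∀ x' ∈ maximalIdeal S, x' ∉ (maximalIdeal S) ^ 2 →
      ∃ z' ∈ maximalIdeal S, ∃ g' ∈ (maximalIdeal S) ^ 2,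
        Q = Ideal.span {x' * z', g'} := by
  obtain ⟨y, hyreg, hyspan⟩ := hregS
  intro x' hx'M hx'2
  have hrange : Set.range y = {y 0, y 1} := by
    ext s
    simp only [Set.mem_range, Set.mem_insert_iff, Set.mem_singleton_iff,
      Fin.exists_fin_two, eq_comm]
  have hx'span : x' ∈ Ideal.span ({y 0, y 1} : Set S) := by
    rw [← hrange, hyspan]; exact hx'M
  obtain ⟨a, b, hab⟩ := Ideal.mem_span_pair.mp hx'span
  have hy0M : y 0 ∈ maximalIdeal S := by
    rw [← hyspan]; exact Ideal.subset_span ⟨0, rfl⟩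
  have hy1M : y 1 ∈ maximalIdeal S := by
    rw [← hyspan]; exact Ideal.subset_span ⟨1, rfl⟩
  have htM : ∃ t, t ∈ maximalIdeal S ∧ maximalIdeal S = Ideal.span {x', t} := by
    by_cases hua : IsUnit a
    · obtain ⟨a', ha'⟩ := isUnit_iff_exists_inv.mp hua
      refine ⟨y 1, hy1M, le_antisymm ?_ ?_⟩
      · rw [← hyspan, hrange, Ideal.span_le, Set.insert_subset_iff, Set.singleton_subset_iff]
        exact ⟨Ideal.mem_span_pair.mpr
            ⟨a', -(a' * b), by linear_combination (-a') * hab + y 0 * ha'⟩,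
          Ideal.subset_span (Set.mem_insert_of_mem _ rfl)⟩
      · rw [Ideal.span_le, Set.insert_subset_iff, Set.singleton_subset_iff]
        exact ⟨hx'M, hy1M⟩
    · by_cases hub : IsUnit b
      · obtain ⟨b', hb'⟩ := isUnit_iff_exists_inv.mp hub
        refine ⟨y 0, hy0M, le_antisymm ?_ ?_⟩
        · rw [← hyspan, hrange, Ideal.span_le, Set.insert_subset_iff, Set.singleton_subset_iff]
          exact ⟨Ideal.subset_span (Set.mem_insert_of_mem _ rfl),
            Ideal.mem_span_pair.mpr
              ⟨b', -(b' * a), by linear_combination (-b') * hab + y 1 * hb'⟩⟩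
        · rw [Ideal.span_le, Set.insert_subset_iff, Set.singleton_subset_iff]
          exact ⟨hx'M, hy0M⟩
      · exfalso
        apply hx'2
        have haM : a ∈ maximalIdeal S :=
          (IsLocalRing.mem_maximalIdeal a).mpr (mem_nonunits_iff.mpr hua)
        have hbM : b ∈ maximalIdeal S :=
          (IsLocalRing.mem_maximalIdeal b).mpr (mem_nonunits_iff.mpr hub)
        rw [pow_two, ← hab]
        exact add_mem (Ideal.mul_mem_mul haM hy0M) (Ideal.mul_mem_mul hbM hy1M)
  obtain ⟨t, htMmem, hMt⟩ := htM
  set I := Ideal.span ({x'} : Set S) with hI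
  have hIM : I ≤ maximalIdeal S := by
    rw [hI, Ideal.span_le, Set.singleton_subset_iff]; exact hx'M
  have hMne : maximalIdeal S ≠ ⊤ := Ideal.IsMaximal.ne_top inferInstance
  have hInetop : I ≠ ⊤ := fun h => hMne (top_le_iff.mp (h ▸ hIM))
  letI : Nontrivial (S ⧸ I) := Ideal.Quotient.nontrivial_iff.mpr hInetop
  letI : IsLocalRing (S ⧸ I) :=
    IsLocalRing.of_surjective' (Ideal.Quotient.mk I) Ideal.Quotient.mk_surjective
  letI : IsNoetherianRing (S ⧸ I) :=
    isNoetherianRing_of_surjective S (S ⧸ I) (Ideal.Quotient.mk I) Ideal.Quotient.mk_surjective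
  have hx0 : (Ideal.Quotient.mk I) x' = 0 := Ideal.Quotient.eq_zero_iff_mem.mpr (Ideal.subset_span rfl)
  have hmax : ∀ r : S ⧸ I, ¬IsUnit r → r ∈ Ideal.span {(Ideal.Quotient.mk I) t} := by
    intro r hr
    obtain ⟨s, rfl⟩ := Ideal.Quotient.mk_surjective r
    have hsM : s ∈ maximalIdeal S :=
      (IsLocalRing.mem_maximalIdeal s).mpr (mem_nonunits_iff.mpr (fun h => hr (h.map (Ideal.Quotient.mk I))))
    rw [hMt] at hsM
    obtain ⟨c, d, hcd⟩ := Ideal.mem_span_pair.mp hsM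
    refine Ideal.mem_span_singleton'.mpr ⟨Ideal.Quotient.mk I d, ?_⟩
    rw [← hcd, _root_.map_add, _root_.map_mul, _root_.map_mul, hx0]
    ring
  have htnonunit : ¬ IsUnit ((Ideal.Quotient.mk I) t) := by
    intro h
    obtain ⟨w, hw⟩ := isUnit_iff_exists_inv.mp h
    obtain ⟨s, rfl⟩ := Ideal.Quotient.mk_surjective w
    have hts1 : t * s - 1 ∈ I := by
      rw [← Ideal.Quotient.eq_zero_iff_mem, _root_.map_sub, _root_.map_mul, _root_.map_one,
        hw]
      ring
    have h1 : (1 : S) ∈ maximalIdeal S := by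
      have hts : t * s ∈ maximalIdeal S := Ideal.mul_mem_right _ _ htMmem
      simpa using sub_mem hts (hIM hts1)
    exact (Ideal.ne_top_iff_one _).mp hMne h1
  have hKrull := Ideal.iInf_pow_eq_bot_of_isLocalRing (Ideal.span {(Ideal.Quotient.mk I) t})
    (by rwa [Ne, Ideal.span_singleton_eq_top])
  have hq₁Q : q₁ ∈ Q := hQ ▸ Ideal.subset_span (Set.mem_insert _ _)
  have hq₂Q : q₂ ∈ Q := hQ ▸ Ideal.subset_span (Set.mem_insert_of_mem _ rfl)
  have hq₁M2 := hQM hq₁Q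
  have hq₂M2 := hQM hq₂Q
  rcases aux_dvd_total ((Ideal.Quotient.mk I) t) hmax hKrull ((Ideal.Quotient.mk I) q₁) ((Ideal.Quotient.mk I) q₂) with h | h
  · -- (Ideal.Quotient.mk I) q₁ ∣ (Ideal.Quotient.mk I) q₂ : q₂ = a₀ q₁ + x' z
    obtain ⟨c, hc⟩ := h
    obtain ⟨a₀, rfl⟩ := Ideal.Quotient.mk_surjective c
    have hmem : q₂ - q₁ * a₀ ∈ I := by
      rw [← Ideal.Quotient.eq_zero_iff_mem, _root_.map_sub, _root_.map_mul, hc]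
      ring
    obtain ⟨z, hz⟩ := Ideal.mem_span_singleton'.mp hmem
    obtain ⟨z', hz', g', hg', hspan⟩ := key_step x' q₂ q₁ hx'2 hq₂M2 hq₁M2
      ⟨a₀, z, by linear_combination -hz⟩
    exact ⟨z', hz', g', hg', by rw [hQ, Set.pair_comm]; exact hspan⟩
  · -- (Ideal.Quotient.mk I) q₂ ∣ (Ideal.Quotient.mk I) q₁ : q₁ = a₀ q₂ + x' z
    obtain ⟨c, hc⟩ := h
    obtain ⟨a₀, rfl⟩ := Ideal.Quotient.mk_surjective c
    have hmem : q₁ - q₂ * a₀ ∈ I := by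
      rw [← Ideal.Quotient.eq_zero_iff_mem, _root_.map_sub, _root_.map_mul, hc]
      ring
    obtain ⟨z, hz⟩ := Ideal.mem_span_singleton'.mp hmem
    obtain ⟨z', hz', g', hg', hspan⟩ := key_step x' q₁ q₂ hx'2 hq₁M2 hq₂M2
      ⟨a₀, z, by linear_combination -hz⟩
    exact ⟨z', hz', g', hg', by rw [hQ]; exact hspan⟩
end

section
/- Let A be an Artinian local ring with maximal ideal M whose socle satisfies (0 : M) = vA for some v ≠ 0 (A is zero-dimensional Gorenstein). Suppose v = a_r·a_{r-1}⋯a₁ is a factorization of v (r ≥ 1), and set I₀ = 0 and Iᵢ = (0 : (aᵢ⋯a₁)A) for 1 ≤ i ≤ r. Then: (1) I₀ ⊆ I₁ ⊆ ⋯ ⊆ I_r = M; (2) I_{i-1} : Iᵢ = I_{i-1} + aᵢ·A for 1 ≤ i ≤ r; (3) Iᵢ : M = Iᵢ + (a_r⋯a_{i+1})·A for 0 ≤ i ≤ r (with the empty product for i = r read as 1); and (4) for each i, the inclusion I_{i-1} ⊆ Iᵢ is an equality if and only if aᵢ is a unit of A (so the chain is strict exactly when every aᵢ is a non-unit). -/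
open IsLocalRing Matrix

/-! ### Lattice-theoretic chain lemmas -/

section LatticeLemmas

open Order

variable {α : Type*} [Lattice α] [IsModularLattice α]

lemma myChainBound {a b : α} (hab : a ≤ b)
    (thin : ∀ z, a ≤ z → z ≤ b → z = a ∨ z = b) :
    ∀ (n : ℕ) (p : LTSeries α), p.length = n → p.last ≤ b →
      (n : ℕ∞) ≤ Order.height (p.last ⊓ a) + 1 := by
  intro n
  induction n with
  | zero => intro p _ _; simp
  | succ n ih =>
    intro p hlen hlast
    have hne : p.length ≠ 0 := by omega
    have hxy : p.eraseLast.last < p.last := p.eraseLast_last_rel_last hne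
    have hlen' : p.eraseLast.length = n := by
      rw [RelSeries.eraseLast_length, hlen]
      omega
    by_cases hya : p.last ≤ a
    · rw [inf_eq_left.mpr hya]
      have h1 := Order.length_le_height_last (p := p)
      rw [hlen] at h1
      exact le_trans h1 le_self_add
    · by_cases hxa : p.eraseLast.last ≤ a
      · have h1 : p.eraseLast.last ≤ p.last ⊓ a := le_inf hxy.le hxa
        have h2 := Order.length_le_height_last (p := p.eraseLast)
        rw [hlen'] at h2
        have h3 : ((n + 1 : ℕ) : ℕ∞) = (n : ℕ∞) + 1 := by push_cast; ring
        rw [h3]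
        exact add_le_add_left (h2.trans (Order.height_mono h1)) 1
      · have hxb : p.eraseLast.last ⊔ a = b := by
          rcases thin (p.eraseLast.last ⊔ a) le_sup_right
            (sup_le (hxy.le.trans hlast) hab) with h | h
          · exact absurd (le_sup_left.trans h.le) hxa
          · exact h
        have hstrict : p.eraseLast.last ⊓ a < p.last ⊓ a := by
          refine lt_of_le_of_ne (inf_le_inf_right a hxy.le) (fun heq => ?_)
          have hmod : (p.eraseLast.last ⊔ a) ⊓ p.last = p.eraseLast.last ⊔ a ⊓ p.last :=
            sup_inf_assoc_of_le a hxy.le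
          rw [hxb, inf_eq_right.mpr hlast] at hmod
          have h4 : a ⊓ p.last = p.eraseLast.last ⊓ a := by
            rw [inf_comm]; exact heq.symm
          rw [h4, sup_inf_self] at hmod
          exact absurd hmod hxy.ne'
        have ih' := ih p.eraseLast hlen' (hxy.le.trans hlast)
        by_cases htop : Order.height (p.last ⊓ a) = ⊤
        · rw [htop]; simp
        · have hfin : Order.height (p.eraseLast.last ⊓ a) < ⊤ :=
            lt_of_le_of_lt (Order.height_mono hstrict.le) (lt_top_iff_ne_top.mpr htop)
          have hlt : Order.height (p.eraseLast.last ⊓ a) < Order.height (p.last ⊓ a) :=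
            Order.height_strictMono hstrict hfin
          have h5 : Order.height (p.eraseLast.last ⊓ a) + 1 ≤ Order.height (p.last ⊓ a) :=
            Order.add_one_le_of_lt hlt
          have h3 : ((n + 1 : ℕ) : ℕ∞) = (n : ℕ∞) + 1 := by push_cast; ring
          rw [h3]
          calc (n : ℕ∞) + 1 ≤ (Order.height (p.eraseLast.last ⊓ a) + 1) + 1 :=
                add_le_add_left ih' 1
            _ ≤ Order.height (p.last ⊓ a) + 1 := add_le_add_left h5 1

lemma myHeightStep {a b : α} (hab : a ≤ b)
    (thin : ∀ z, a ≤ z → z ≤ b → z = a ∨ z = b) :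
    Order.height b ≤ Order.height a + 1 := by
  apply Order.height_le
  intro p hp
  have h1 := myChainBound hab thin p.length p rfl hp.le
  exact h1.trans (add_le_add_left (Order.height_mono inf_le_right) 1)

lemma myCoheightStep {a b : α} (hab : a ≤ b)
    (thin : ∀ z, a ≤ z → z ≤ b → z = a ∨ z = b) :
    Order.coheight a ≤ Order.coheight b + 1 := by
  have h := myHeightStep (α := αᵒᵈ) (a := OrderDual.toDual b) (b := OrderDual.toDual a)
    hab (fun z h1 h2 => Or.symm (thin (OrderDual.ofDual z) h2 h1))
  simpa using h

end LatticeLemmas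

/-! ### Artinian local ring lemmas -/

section ArtinianLocal

variable {A : Type*} [CommRing A] [IsArtinianRing A] [IsLocalRing A]

lemma myMaxPowBot : ∃ n : ℕ, (maximalIdeal A) ^ n = ⊥ := by
  obtain ⟨n, hn⟩ := IsArtinianRing.isNilpotent_jacobson_bot (R := A)
  refine ⟨n, ?_⟩
  rwa [IsLocalRing.jacobson_eq_maximalIdeal ⊥ bot_ne_top, Ideal.zero_eq_bot] at hn

lemma mySocStep {I : Ideal A} (hI : I ≠ ⊤) :
    ∃ y : A, y ∉ I ∧ ∀ m ∈ maximalIdeal A, y * m ∈ I := by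
  classical
  obtain ⟨n, hn⟩ := myMaxPowBot (A := A)
  have hex : ∃ k, (maximalIdeal A) ^ k ≤ I := ⟨n, by rw [hn]; exact bot_le⟩
  have hm : (maximalIdeal A) ^ (Nat.find hex) ≤ I := Nat.find_spec hex
  have hm0 : Nat.find hex ≠ 0 := by
    intro h
    rw [h, pow_zero, Ideal.one_eq_top] at hm
    exact hI (top_le_iff.mp hm)
  obtain ⟨k, hk⟩ : ∃ k, Nat.find hex = k + 1 := ⟨Nat.find hex - 1, by omega⟩
  have hnotle : ¬ (maximalIdeal A) ^ k ≤ I := Nat.find_min hex (by omega)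
  obtain ⟨y, hy1, hy2⟩ := SetLike.not_le_iff_exists.mp hnotle
  refine ⟨y, hy2, fun z hz => hm ?_⟩
  rw [hk, pow_succ]
  exact Ideal.mul_mem_mul hy1 hz

lemma myNoetherian : IsNoetherianRing A := by
  obtain ⟨n, hn⟩ := myMaxPowBot (A := A)
  have key : ∀ i : ℕ, IsNoetherian A ↥((maximalIdeal A) ^ (i + 1)) →
      IsNoetherian A ↥((maximalIdeal A) ^ i) := by
    intro i hi
    have hle : (maximalIdeal A) ^ (i + 1) ≤ (maximalIdeal A) ^ i :=
      Ideal.pow_le_pow_right (by omega)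
    set P := ↥((maximalIdeal A) ^ i)
    set S : Submodule A P :=
      Submodule.comap ((maximalIdeal A) ^ i).subtype ((maximalIdeal A) ^ (i + 1)) with hS
    haveI hSnoeth : IsNoetherian A ↥S :=
      isNoetherian_of_linearEquiv (Submodule.comapSubtypeEquivOfLe hle).symm
    have htor : Module.IsTorsionBySet A (P ⧸ S) ((maximalIdeal A) : Set A) := by
      rintro x ⟨m, hm⟩
      obtain ⟨p, rfl⟩ := Submodule.Quotient.mk_surjective S x
      rw [← Submodule.Quotient.mk_smul, Submodule.Quotient.mk_eq_zero]
      show m • p ∈ S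
      have h2 : m * (p : A) ∈ (maximalIdeal A) ^ i * maximalIdeal A := by
        have h3 := Ideal.mul_mem_mul p.2 hm
        rwa [mul_comm (p : A) m] at h3
      show ((m • p : P) : A) ∈ (maximalIdeal A) ^ (i + 1)
      rw [pow_succ]
      exact h2
    letI : Module (IsLocalRing.ResidueField A) (P ⧸ S) := htor.module
    letI : IsScalarTower A (IsLocalRing.ResidueField A) (P ⧸ S) := htor.isScalarTower
    have hart : IsArtinian (IsLocalRing.ResidueField A) (P ⧸ S) :=
      isArtinian_of_tower A inferInstance
    have hknoe : IsNoetherian (IsLocalRing.ResidueField A) (P ⧸ S) :=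
      (IsSemisimpleModule.finite_tfae.out 2 1).mp hart
    have hQnoeth : IsNoetherian A (P ⧸ S) := by
      let f : Submodule A (P ⧸ S) → Submodule (IsLocalRing.ResidueField A) (P ⧸ S) := fun W =>
        { carrier := W
          add_mem' := fun h1 h2 => W.add_mem h1 h2
          zero_mem' := W.zero_mem
          smul_mem' := fun cc x hx => by
            obtain ⟨d, rfl⟩ := IsLocalRing.residue_surjective (R := A) cc
            rw [show ((IsLocalRing.residue A d) • x : P ⧸ S) = d • x from by
              rw [← IsLocalRing.ResidueField.algebraMap_eq, algebraMap_smul]]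
            exact W.smul_mem d hx }
      have hf : StrictMono f := by
        intro W1 W2 hlt
        rw [SetLike.lt_iff_le_and_exists] at hlt ⊢
        obtain ⟨hle, z, hz1, hz2⟩ := hlt
        exact ⟨fun t ht => hle ht, z, hz1, hz2⟩
      haveI hwfk : WellFoundedGT (Submodule (IsLocalRing.ResidueField A) (P ⧸ S)) :=
        hknoe.wellFoundedGT
      exact isNoetherian_mk (hf.wellFoundedGT)
    exact (isNoetherian_iff_submodule_quotient S).mpr ⟨hSnoeth, hQnoeth⟩
  have main : ∀ j : ℕ, IsNoetherian A ↥((maximalIdeal A) ^ (n - j)) := by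
    intro j
    induction j with
    | zero =>
      rw [Nat.sub_zero, hn]
      haveI : Subsingleton ↥(⊥ : Ideal A) := by
        constructor
        rintro ⟨x, hx⟩ ⟨y, hy⟩
        rw [Submodule.mem_bot] at hx hy
        simp [hx, hy]
      infer_instance
    | succ j ih =>
      rcases Nat.lt_or_ge j n with h | h
      · have heq : n - j = (n - (j + 1)) + 1 := by omega
        rw [heq] at ih
        exact key _ ih
      · have heq : n - (j + 1) = n - j := by omega
        rw [heq]; exact ih
  have hfin := main n
  rw [Nat.sub_self, pow_zero, Ideal.one_eq_top] at hfin
  exact isNoetherian_of_linearEquiv (Submodule.topEquiv (R := A) (M := A))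

lemma myCoheightNeTop (J : Ideal A) : Order.coheight J ≠ ⊤ := by
  haveI := myNoetherian (A := A)
  have wfgt : WellFounded ((· > ·) : Ideal A → Ideal A → Prop) := IsWellFounded.wf
  refine wfgt.induction (C := fun J => Order.coheight J ≠ ⊤) J ?_
  intro J ih
  by_cases htop : J = ⊤
  · subst htop; simp
  · obtain ⟨y, hy1, hy2⟩ := mySocStep htop
    set K := J ⊔ Ideal.span {y} with hK
    have hJK : J < K := by
      refine lt_of_le_of_ne le_sup_left (fun h => hy1 ?_)
      have h2 : Ideal.span {y} ≤ J := by rw [h]; exact le_sup_right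
      exact h2 (Ideal.subset_span rfl)
    have thin : ∀ z, J ≤ z → z ≤ K → z = J ∨ z = K := by
      intro z hz1 hz2
      by_cases hzJ : z = J
      · exact Or.inl hzJ
      · right
        obtain ⟨w, hwz, hwJ⟩ := SetLike.not_le_iff_exists.mp
          (fun hle => hzJ (le_antisymm hle hz1))
        obtain ⟨i, hi, s, hs, hisw⟩ := Submodule.mem_sup.mp (hz2 hwz)
        obtain ⟨c, hc⟩ := Ideal.mem_span_singleton'.mp hs
        have hcM : c ∉ maximalIdeal A := by
          intro hcm
          apply hwJ
          have hcy : c * y ∈ J := by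
            have h3 := hy2 c hcm
            rwa [mul_comm] at h3
          rw [← hisw, ← hc]
          exact J.add_mem hi hcy
        have hcu : IsUnit c := by
          rwa [IsLocalRing.mem_maximalIdeal, mem_nonunits_iff, not_not] at hcM
        obtain ⟨u, rfl⟩ := hcu
        have hsz : s ∈ z := by
          have h3 : w - i ∈ z := Submodule.sub_mem z hwz (hz1 hi)
          rwa [← hisw, add_sub_cancel_left] at h3
        have hyz : y ∈ z := by
          have h3 : (↑u⁻¹ : A) * s ∈ z := Ideal.mul_mem_left z _ hsz
          rwa [← hc, ← mul_assoc, Units.inv_mul, one_mul] at h3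
        have hKz : K ≤ z := by
          refine sup_le hz1 ?_
          rw [Ideal.span_singleton_le_iff_mem]
          exact hyz
        exact le_antisymm hz2 hKz
    have hstep : Order.coheight J ≤ Order.coheight K + 1 := myCoheightStep hJK.le thin
    intro hJtop
    rw [hJtop, top_le_iff] at hstep
    exact absurd hstep (WithTop.add_ne_top.mpr ⟨ih K hJK, ENat.one_ne_top⟩)

lemma myHeightNeTop (J : Ideal A) : Order.height J ≠ ⊤ := by
  haveI := myNoetherian (A := A)
  have wflt : WellFounded ((· < ·) : Ideal A → Ideal A → Prop) := IsWellFounded.wf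
  have wfgt : WellFounded ((· > ·) : Ideal A → Ideal A → Prop) := IsWellFounded.wf
  refine wflt.induction (C := fun J => Order.height J ≠ ⊤) J ?_
  intro J ih
  by_cases hbot : J = ⊥
  · subst hbot; simp
  · have hne : Set.Nonempty {K : Ideal A | K < J} := ⟨⊥, bot_lt_iff_ne_bot.mpr hbot⟩
    obtain ⟨K, hKS, hKmax⟩ := wfgt.has_min _ hne
    have thin : ∀ z, K ≤ z → z ≤ J → z = K ∨ z = J := by
      intro z hz1 hz2
      rcases eq_or_lt_of_le hz2 with h | h
      · exact Or.inr h
      · left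
        by_contra hzK
        exact hKmax z h (lt_of_le_of_ne hz1 (Ne.symm hzK))
    have hstep := myHeightStep hKS.le thin
    intro hJtop
    rw [hJtop, top_le_iff] at hstep
    exact absurd hstep (WithTop.add_ne_top.mpr ⟨ih K hKS, ENat.one_ne_top⟩)

lemma myMemAnn (N : Ideal A) (z : A) :
    z ∈ (⊥ : Ideal A).colon N ↔ ∀ p ∈ N, z * p = 0 := by
  rw [Submodule.mem_colon]
  constructor
  · intro h p hp
    have := h p hp
    simpa using this
  · intro h p hp
    simpa using h p hp

lemma myStar (v : A) (hv0 : v ≠ 0)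
    (hsoc : (⊥ : Ideal A).colon (maximalIdeal A) = Ideal.span {v})
    (I : Ideal A) :
    Order.height ((⊥ : Ideal A).colon I) ≤ Order.coheight I := by
  haveI := myNoetherian (A := A)
  have hvkill : ∀ m ∈ maximalIdeal A, v * m = 0 := by
    have hv1 : v ∈ (⊥ : Ideal A).colon (maximalIdeal A) := by
      rw [hsoc]; exact Ideal.subset_span rfl
    exact (myMemAnn _ v).mp hv1
  have wfgt : WellFounded ((· > ·) : Ideal A → Ideal A → Prop) := IsWellFounded.wf
  refine wfgt.induction
    (C := fun I => Order.height ((⊥ : Ideal A).colon I) ≤ Order.coheight I) I ?_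
  intro I ih
  by_cases htop : I = ⊤
  · subst htop
    have hbot : (⊥ : Ideal A).colon (⊤ : Ideal A) = ⊥ := by
      apply le_antisymm _ bot_le
      intro z hz
      have h1 := (myMemAnn ⊤ z).mp hz 1 Submodule.mem_top
      simpa using h1
    rw [hbot]
    simp
  · obtain ⟨y, hy1, hy2⟩ := mySocStep htop
    set K := I ⊔ Ideal.span {y} with hKdef
    have hIK : I < K := by
      refine lt_of_le_of_ne le_sup_left (fun h => hy1 ?_)
      have h2 : Ideal.span {y} ≤ I := by rw [h]; exact le_sup_right
      exact h2 (Ideal.subset_span rfl)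
    have hAnnLe : (⊥ : Ideal A).colon K ≤ (⊥ : Ideal A).colon I := by
      intro z hz
      rw [myMemAnn] at hz ⊢
      exact fun p hp => hz p (Submodule.mem_sup_left hp)
    have hthin : ∀ W, (⊥ : Ideal A).colon K ≤ W → W ≤ (⊥ : Ideal A).colon I →
        W = (⊥ : Ideal A).colon K ∨ W = (⊥ : Ideal A).colon I := by
      intro W hW1 hW2
      by_cases hWeq : W = (⊥ : Ideal A).colon K
      · exact Or.inl hWeq
      right
      obtain ⟨k, hkW, hk2⟩ := SetLike.not_le_iff_exists.mp
        (fun hle => hWeq (le_antisymm hle hW1))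
      have hkI : ∀ p ∈ I, k * p = 0 := (myMemAnn I k).mp (hW2 hkW)
      have hky : k * y ≠ 0 := by
        intro h0
        apply hk2
        rw [myMemAnn]
        intro p hp
        obtain ⟨i, hi, s, hs, rfl⟩ := Submodule.mem_sup.mp hp
        obtain ⟨cc, rfl⟩ := Ideal.mem_span_singleton'.mp hs
        rw [mul_add, hkI i hi, mul_left_comm, h0, mul_zero, add_zero]
      have hkyv : k * y ∈ Ideal.span {v} := by
        rw [← hsoc, myMemAnn]
        intro m hm
        rw [mul_assoc]
        exact hkI _ (hy2 m hm)
      obtain ⟨s, hs⟩ := Ideal.mem_span_singleton'.mp hkyv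
      have hsM : s ∉ maximalIdeal A := by
        intro hsm
        apply hky
        rw [← hs, mul_comm]
        exact hvkill s hsm
      have hsu : IsUnit s := by
        rwa [IsLocalRing.mem_maximalIdeal, mem_nonunits_iff, not_not] at hsM
      obtain ⟨u, rfl⟩ := hsu
      have hv : (↑u⁻¹ : A) * (k * y) = v := by
        rw [← hs, ← mul_assoc, Units.inv_mul, one_mul]
      refine le_antisymm hW2 ?_
      intro z hz
      have hzI : ∀ p ∈ I, z * p = 0 := (myMemAnn I z).mp hz
      have hzyv : z * y ∈ Ideal.span {v} := by
        rw [← hsoc, myMemAnn]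
        intro m hm
        rw [mul_assoc]
        exact hzI _ (hy2 m hm)
      obtain ⟨t, ht⟩ := Ideal.mem_span_singleton'.mp hzyv
      set w := z - t * (↑u⁻¹ * k) with hw
      have hwy : w * y = 0 := by
        have h6 : w * y = z * y - t * ((↑u⁻¹ : A) * (k * y)) := by rw [hw]; ring
        rw [h6, hv, ← ht, sub_self]
      have hwI : ∀ p ∈ I, w * p = 0 := by
        intro p hp
        have h6 : w * p = z * p - (t * ↑u⁻¹) * (k * p) := by rw [hw]; ring
        rw [h6, hzI p hp, hkI p hp, mul_zero, sub_zero]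
      have hwK : w ∈ (⊥ : Ideal A).colon K := by
        rw [myMemAnn]
        intro p hp
        obtain ⟨i, hi, sx, hsx, rfl⟩ := Submodule.mem_sup.mp hp
        obtain ⟨cc, rfl⟩ := Ideal.mem_span_singleton'.mp hsx
        rw [mul_add, hwI i hi, mul_left_comm, hwy, mul_zero, add_zero]
      have h7 : z = w + (t * ↑u⁻¹) * k := by rw [hw]; ring
      rw [h7]
      exact W.add_mem (hW1 hwK) (Ideal.mul_mem_left W _ hkW)
    have h1 := myHeightStep hAnnLe hthin
    have h2 := ih K hIK
    have h3 : Order.coheight K + 1 ≤ Order.coheight I :=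
      Order.add_one_le_of_lt
        (Order.coheight_strictAnti hIK (lt_top_iff_ne_top.mpr (myCoheightNeTop K)))
    calc Order.height ((⊥ : Ideal A).colon I)
        ≤ Order.height ((⊥ : Ideal A).colon K) + 1 := h1
      _ ≤ Order.coheight K + 1 := add_le_add_left h2 1
      _ ≤ Order.coheight I := h3

lemma myKey (v : A) (hv0 : v ≠ 0)
    (hsoc : (⊥ : Ideal A).colon (maximalIdeal A) = Ideal.span {v}) (x : A) :
    (⊥ : Ideal A).colon ((⊥ : Ideal A).colon (Ideal.span {x})) = Ideal.span {x} := by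
  haveI := myNoetherian (A := A)
  have hxmem : x ∈ (⊥ : Ideal A).colon ((⊥ : Ideal A).colon (Ideal.span {x})) := by
    rw [myMemAnn]
    intro p hp
    have h1 : p * x = 0 := by
      have := Ideal.mem_colon_span_singleton.mp hp
      simpa using this
    rw [mul_comm]
    exact h1
  have hle : Ideal.span {x} ≤ (⊥ : Ideal A).colon ((⊥ : Ideal A).colon (Ideal.span {x})) := by
    rw [Ideal.span_singleton_le_iff_mem]
    exact hxmem
  have hch : Order.coheight ((⊥ : Ideal A).colon (Ideal.span {x}))
      ≤ Order.height (Ideal.span {x}) := by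
    apply Order.coheight_le
    intro p hp
    have hf_le : ∀ K : Ideal A, Submodule.map (LinearMap.lsmul A A x) K ≤ Ideal.span {x} := by
      rintro K z ⟨k, hk, rfl⟩
      rw [LinearMap.lsmul_apply, smul_eq_mul]
      exact Ideal.mem_span_singleton.mpr (dvd_mul_right x k)
    have hf_strict : ∀ i : Fin p.length,
        Submodule.map (LinearMap.lsmul A A x) (p i.castSucc)
          < Submodule.map (LinearMap.lsmul A A x) (p i.succ) := by
      intro i
      apply lt_of_le_of_ne (Submodule.map_mono (p.step i).le)
      intro heq
      apply (show p i.castSucc < p i.succ from p.step i).not_ge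
      intro z hz
      have hz1 : (LinearMap.lsmul A A x) z ∈
          Submodule.map (LinearMap.lsmul A A x) (p i.castSucc) := by
        rw [heq]
        exact Submodule.mem_map_of_mem hz
      obtain ⟨k, hk, hkx⟩ := Submodule.mem_map.mp hz1
      have hxk : x * k = x * z := by
        have := hkx
        rwa [LinearMap.lsmul_apply, LinearMap.lsmul_apply, smul_eq_mul, smul_eq_mul] at this
      have h0 : (z - k) * x = 0 := by
        have h6 : x * (z - k) = 0 := by rw [mul_sub, hxk, sub_self]
        rwa [mul_comm] at h6
      have hhead : (⊥ : Ideal A).colon (Ideal.span {x}) ≤ p i.castSucc := by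
        rw [← hp]
        exact p.monotone (Fin.zero_le _)
      have h2 : z - k ∈ p i.castSucc :=
        hhead (Ideal.mem_colon_span_singleton.mpr (by rw [h0]; exact Submodule.zero_mem ⊥))
      have h3 := Submodule.add_mem _ h2 hk
      simpa using h3
    let q : LTSeries (Ideal A) :=
      ⟨p.length, fun j => Submodule.map (LinearMap.lsmul A A x) (p j), hf_strict⟩
    have hlast : q.last ≤ Ideal.span {x} := hf_le _
    have h4 := Order.length_le_height (x := Ideal.span {x}) hlast
    exact h4
  have h1 : Order.height ((⊥ : Ideal A).colon ((⊥ : Ideal A).colon (Ideal.span {x})))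
      ≤ Order.height (Ideal.span {x}) :=
    (myStar v hv0 hsoc _).trans hch
  by_contra hne
  have hlt : Ideal.span {x} < (⊥ : Ideal A).colon ((⊥ : Ideal A).colon (Ideal.span {x})) :=
    lt_of_le_of_ne hle (fun h => hne h.symm)
  have h5 := Order.height_strictMono hlt (lt_top_iff_ne_top.mpr (myHeightNeTop _))
  exact lt_irrefl _ (h5.trans_le h1)

end ArtinianLocal

/-- **Proposition 3.2 (ii).** Let `A` be a zero-dimensional Gorenstein local ring, with socle
`(0 : M) = vA`, `v ≠ 0`, and let `v = a_r ⋯ a₁` be a factorization of `v` (here `a : Fin r → A`,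
with `a i` playing the role of `a_{i+1}`). Set `I i = (0 : (a_i ⋯ a₁)A)`, i.e. the annihilator
of the product of the first `i` factors (so `I 0 = 0`). Then `I 0 ⊆ I 1 ⊆ ⋯ ⊆ I r = M`,
`I_{i-1} : I_i = I_{i-1} + a_i A`, `I_i : M = I_i + (a_r ⋯ a_{i+1}) A` (empty product read
as `1`), and the inclusion `I_{i-1} ⊆ I_i` is an equality exactly when `a_i` is a unit. -/
theorem stmt_10 {A : Type*} [CommRing A] [IsArtinianRing A] [IsLocalRing A]
    {r : ℕ} (hr : 1 ≤ r) (a : Fin r → A) (v : A) (hv0 : v ≠ 0)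
    (hsoc : (⊥ : Ideal A).colon (maximalIdeal A) = Ideal.span {v})
    (hfac : v = ∏ i, a i)
    (I : ℕ → Ideal A)
    (hI : ∀ i : ℕ, I i = (⊥ : Ideal A).colon
      (Ideal.span {∏ j ∈ Finset.univ.filter (fun j : Fin r => (j : ℕ) < i), a j})) :
    (∀ i : Fin r, I (i : ℕ) ≤ I ((i : ℕ) + 1)) ∧
    I r = maximalIdeal A ∧
    (∀ i : Fin r, (I (i : ℕ)).colon (I ((i : ℕ) + 1)) = I (i : ℕ) + Ideal.span {a i}) ∧
    (∀ i : ℕ, i ≤ r → (I i).colon (maximalIdeal A) =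
      I i + Ideal.span {∏ j ∈ Finset.univ.filter (fun j : Fin r => i ≤ (j : ℕ)), a j}) ∧
    (∀ i : Fin r, I (i : ℕ) = I ((i : ℕ) + 1) ↔ IsUnit (a i)) := by
  classical
  obtain ⟨b, hbdef⟩ : ∃ b : ℕ → A, ∀ i : ℕ,
      b i = ∏ j ∈ Finset.univ.filter (fun j : Fin r => (j : ℕ) < i), a j :=
    ⟨_, fun _ => rfl⟩
  obtain ⟨c, hcdef⟩ : ∃ c : ℕ → A, ∀ i : ℕ,
      c i = ∏ j ∈ Finset.univ.filter (fun j : Fin r => i ≤ (j : ℕ)), a j :=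
    ⟨_, fun _ => rfl⟩
  have hmem : ∀ (i : ℕ) (z : A), z ∈ I i ↔ z * b i = 0 := by
    intro i z
    rw [hI i, ← hbdef i, Ideal.mem_colon_span_singleton, Ideal.mem_bot]
  have hsucc : ∀ i : Fin r, b ((i : ℕ) + 1) = a i * b (i : ℕ) := by
    intro i
    rw [hbdef ((i : ℕ) + 1), hbdef (i : ℕ)]
    rw [show (Finset.univ.filter (fun j : Fin r => (j : ℕ) < (i : ℕ) + 1))
        = insert i (Finset.univ.filter (fun j : Fin r => (j : ℕ) < (i : ℕ))) by
      ext j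
      simp only [Finset.mem_filter, Finset.mem_insert, Finset.mem_univ, true_and, Fin.ext_iff]
      omega]
    rw [Finset.prod_insert (by simp)]
  have hcsucc : ∀ i : Fin r, c (i : ℕ) = a i * c ((i : ℕ) + 1) := by
    intro i
    rw [hcdef (i : ℕ), hcdef ((i : ℕ) + 1)]
    rw [show (Finset.univ.filter (fun j : Fin r => (i : ℕ) ≤ (j : ℕ)))
        = insert i (Finset.univ.filter (fun j : Fin r => (i : ℕ) + 1 ≤ (j : ℕ))) by
      ext j
      simp only [Finset.mem_filter, Finset.mem_insert, Finset.mem_univ, true_and, Fin.ext_iff]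
      omega]
    rw [Finset.prod_insert (by simp)]
  have hbc : ∀ i : ℕ, b i * c i = v := by
    intro i
    rw [hbdef i, hcdef i, hfac]
    rw [show (Finset.univ.filter (fun j : Fin r => i ≤ (j : ℕ)))
        = (Finset.univ.filter (fun j : Fin r => ¬ (j : ℕ) < i)) by
      ext j; simp [not_lt]]
    exact Finset.prod_filter_mul_prod_filter_not _ _ _
  have hbr : b r = v := by
    rw [hbdef r, Finset.filter_true_of_mem (fun j _ => j.isLt), hfac]
  have hvkill : ∀ m ∈ maximalIdeal A, v * m = 0 := by
    have hv1 : v ∈ (⊥ : Ideal A).colon (maximalIdeal A) := by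
      rw [hsoc]; exact Ideal.subset_span rfl
    exact (myMemAnn _ v).mp hv1
  have hsocmem : ∀ z : A, (∀ m ∈ maximalIdeal A, z * m = 0) → z ∈ Ideal.span {v} := by
    intro z hz
    rw [← hsoc, myMemAnn]
    exact hz
  have hmono : ∀ i : Fin r, I (i : ℕ) ≤ I ((i : ℕ) + 1) := by
    intro i z hz
    rw [hmem] at hz ⊢
    rw [hsucc i]
    calc z * (a i * b (i : ℕ)) = a i * (z * b (i : ℕ)) := by ring
      _ = 0 := by rw [hz, mul_zero]
  have hIr : I r = maximalIdeal A := by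
    ext z
    rw [hmem, hbr]
    constructor
    · intro hz
      by_contra hzM
      have hzu : IsUnit z := by
        rwa [IsLocalRing.mem_maximalIdeal, mem_nonunits_iff, not_not] at hzM
      obtain ⟨u, rfl⟩ := hzu
      apply hv0
      calc v = ↑u⁻¹ * (↑u * v) := by rw [← mul_assoc, Units.inv_mul, one_mul]
        _ = ↑u⁻¹ * 0 := by rw [hz]
        _ = 0 := mul_zero _
    · intro hz
      rw [mul_comm]
      exact hvkill z hz
  have hcolon : ∀ i : Fin r,
      (I (i : ℕ)).colon (I ((i : ℕ) + 1)) = I (i : ℕ) + Ideal.span {a i} := by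
    intro i
    apply le_antisymm
    · intro z hz
      have hz' : ∀ w ∈ I ((i : ℕ) + 1), z * w ∈ I (i : ℕ) := by
        intro w hw
        have := Submodule.mem_colon.mp hz w hw
        simpa using this
      have hmem2 : z * b (i : ℕ) ∈ (⊥ : Ideal A).colon
          ((⊥ : Ideal A).colon (Ideal.span {b ((i : ℕ) + 1)})) := by
        rw [myMemAnn]
        intro p hp
        have hpI : p ∈ I ((i : ℕ) + 1) := by
          rw [hI ((i : ℕ) + 1), ← hbdef ((i : ℕ) + 1)]
          exact hp
        have h2 : (z * p) * b (i : ℕ) = 0 := (hmem _ _).mp (hz' p hpI)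
        calc z * b (i : ℕ) * p = (z * p) * b (i : ℕ) := by ring
          _ = 0 := h2
      rw [myKey v hv0 hsoc (b ((i : ℕ) + 1))] at hmem2
      obtain ⟨t, ht⟩ := Ideal.mem_span_singleton'.mp hmem2
      have hzt : (z - t * a i) * b (i : ℕ) = 0 := by
        have h4 : (z - t * a i) * b (i : ℕ) = z * b (i : ℕ) - t * (a i * b (i : ℕ)) := by ring
        rw [h4, ← hsucc i, ht, sub_self]
      rw [Submodule.add_eq_sup, show z = (z - t * a i) + t * a i from by ring]
      exact Submodule.add_mem_sup ((hmem _ _).mpr hzt)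
        (Ideal.mem_span_singleton'.mpr ⟨t, rfl⟩)
    · rw [Submodule.add_eq_sup, sup_le_iff]
      constructor
      · intro z hz
        refine Submodule.mem_colon.mpr fun p hp => ?_
        rw [smul_eq_mul, hmem]
        have hz' := (hmem _ _).mp hz
        calc z * p * b (i : ℕ) = p * (z * b (i : ℕ)) := by ring
          _ = 0 := by rw [hz', mul_zero]
      · rw [Ideal.span_singleton_le_iff_mem]
        refine Submodule.mem_colon.mpr fun p hp => ?_
        rw [smul_eq_mul, hmem]
        have hp' := (hmem _ _).mp hp
        rw [hsucc i] at hp'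
        calc a i * p * b (i : ℕ) = p * (a i * b (i : ℕ)) := by ring
          _ = 0 := hp'
  have hcolonM : ∀ i : ℕ, (I i).colon (maximalIdeal A) = I i + Ideal.span {c i} := by
    intro i
    apply le_antisymm
    · intro z hz
      have hz' : ∀ m ∈ maximalIdeal A, z * m ∈ I i := by
        intro m hm
        have := Submodule.mem_colon.mp hz m hm
        simpa using this
      have hzb : z * b i ∈ Ideal.span {v} := by
        apply hsocmem
        intro m hm
        have h2 := (hmem _ _).mp (hz' m hm)
        calc z * b i * m = (z * m) * b i := by ring
          _ = 0 := h2
      obtain ⟨s, hs⟩ := Ideal.mem_span_singleton'.mp hzb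
      have h3 : (z - s * c i) * b i = 0 := by
        have h4 : (z - s * c i) * b i = z * b i - s * (b i * c i) := by ring
        rw [h4, hbc i, ← hs, sub_self]
      rw [Submodule.add_eq_sup, show z = (z - s * c i) + s * c i from by ring]
      exact Submodule.add_mem_sup ((hmem _ _).mpr h3)
        (Ideal.mem_span_singleton'.mpr ⟨s, rfl⟩)
    · rw [Submodule.add_eq_sup, sup_le_iff]
      constructor
      · intro z hz
        refine Submodule.mem_colon.mpr fun m hm => ?_
        rw [smul_eq_mul, hmem]
        have hz' := (hmem _ _).mp hz
        calc z * m * b i = m * (z * b i) := by ring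
          _ = 0 := by rw [hz', mul_zero]
      · rw [Ideal.span_singleton_le_iff_mem]
        refine Submodule.mem_colon.mpr fun m hm => ?_
        rw [smul_eq_mul, hmem]
        calc c i * m * b i = (b i * c i) * m := by ring
          _ = v * m := by rw [hbc i]
          _ = 0 := hvkill m hm
  have hunit : ∀ i : Fin r, I (i : ℕ) = I ((i : ℕ) + 1) ↔ IsUnit (a i) := by
    intro i
    constructor
    · intro heq
      by_contra hna
      have haM : a i ∈ maximalIdeal A := by
        rw [IsLocalRing.mem_maximalIdeal, mem_nonunits_iff]; exact hna
      have hyI1 : c (i : ℕ) ∈ I ((i : ℕ) + 1) := by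
        rw [hmem]
        have h9 : c (i : ℕ) * b ((i : ℕ) + 1) = v * a i := by
          rw [hcsucc i]
          calc (a i * c ((i : ℕ) + 1)) * b ((i : ℕ) + 1)
              = (b ((i : ℕ) + 1) * c ((i : ℕ) + 1)) * a i := by ring
            _ = v * a i := by rw [hbc]
        rw [h9]
        exact hvkill _ haM
      have hyI0 : c (i : ℕ) ∉ I (i : ℕ) := by
        rw [hmem]
        intro h0
        apply hv0
        rw [← hbc (i : ℕ), mul_comm]
        exact h0
      exact hyI0 (by rw [heq]; exact hyI1)
    · intro hu
      obtain ⟨u, hu⟩ := hu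
      apply le_antisymm (hmono i)
      intro z hz
      rw [hmem] at hz ⊢
      rw [hsucc i, ← hu] at hz
      calc z * b (i : ℕ) = ↑u⁻¹ * (z * (↑u * b (i : ℕ))) := by
            rw [show z * ((u : A) * b (i : ℕ)) = ↑u * (z * b (i : ℕ)) from by ring,
              ← mul_assoc, Units.inv_mul, one_mul]
        _ = ↑u⁻¹ * 0 := by rw [hz]
        _ = 0 := mul_zero _
  exact ⟨hmono, hIr, hcolon, fun i _ => by rw [← hcdef i]; exact hcolonM i, hunit⟩
end

section
/- Let A be an Artinian local ring with maximal ideal M whose socle satisfies (0 : M) = vA for some v ≠ 0 (A is zero-dimensional Gorenstein), and suppose A has exponent t + 1 with t ≥ 1, i.e., Mᵗ ≠ 0 and M^{t+1} = 0. Let b ∈ A be nonzero and set I = (0 : bA). If A/I has exponent t, i.e., Mᵗ ⊆ I and M^{t-1} ⊈ I, then b ∈ M \ M²; that is, the annihilator (0 : I) = bA of such a Gorenstein ideal I is generated by a minimal generator of the maximal ideal. -/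
open IsLocalRing Matrix

/-- **Proposition 3.6 (ii)(a).** Let `A` be a zero-dimensional Gorenstein local ring of
exponent `t + 1` (so `Mᵗ ≠ 0` and `M^{t+1} = 0`), with socle `(0 : M) = vA`, `v ≠ 0`.
Let `b ≠ 0` and `I = (0 : bA)`. If `A/I` has exponent `t`, i.e. `Mᵗ ⊆ I` and `M^{t-1} ⊈ I`,
then `b ∈ M \ M²`: the annihilator `(0 : I) = bA` is generated by a minimal generator of the
maximal ideal. -/
theorem stmt_12 {A : Type*} [CommRing A] [IsArtinianRing A] [IsLocalRing A]
    {t : ℕ} (ht : 1 ≤ t)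
    (hMt : (maximalIdeal A) ^ t ≠ ⊥) (hMt1 : (maximalIdeal A) ^ (t + 1) = ⊥)
    (v : A) (hv0 : v ≠ 0)
    (hsoc : (⊥ : Ideal A).colon (maximalIdeal A) = Ideal.span {v})
    (b : A) (hb : b ≠ 0)
    (I : Ideal A) (hIdef : I = (⊥ : Ideal A).colon (Ideal.span {b}))
    (hMtI : (maximalIdeal A) ^ t ≤ I)
    (hMt1I : ¬ (maximalIdeal A) ^ (t - 1) ≤ I) :
    b ∈ maximalIdeal A ∧ b ∉ (maximalIdeal A) ^ 2 := by
  constructor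
  · by_contra hbM
    have hu : IsUnit b := IsLocalRing.notMem_maximalIdeal.mp hbM
    apply hMt
    rw [le_bot_iff.symm]
    intro m hm
    have hmI := hMtI hm
    rw [hIdef, Ideal.mem_colon_span_singleton, Ideal.mem_bot] at hmI
    exact Ideal.mem_bot.mpr (hu.mul_left_eq_zero.mp hmI)
  · intro hb2
    apply hMt1I
    intro x hx
    rw [hIdef, Ideal.mem_colon_span_singleton, Ideal.mem_bot]
    have h1 : x * b ∈ (maximalIdeal A) ^ (t - 1) * (maximalIdeal A) ^ 2 :=
      Ideal.mul_mem_mul hx hb2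
    rw [← pow_add] at h1
    have he : t - 1 + 2 = t + 1 := by omega
    rw [he, hMt1] at h1
    exact Ideal.mem_bot.mp h1
end

section
/- Let A be a local ring with maximal ideal M and let γ be an n×n matrix over A with det(γ) ∈ M \ M². Then there exist invertible n×n matrices θ₁, θ₂ over A and an element d ∈ A with d·A = det(γ)·A such that θ₁·γ·θ₂ is the diagonal matrix diag(d, 1, …, 1). -/
open IsLocalRing Matrix

private lemma det_mem_pow_of_entries {A : Type*} [CommRing A] {n : ℕ}
    (M : Matrix (Fin n) (Fin n) A) (I : Ideal A) (h : ∀ i j, M i j ∈ I) :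
    M.det ∈ I ^ n := by
  rw [Matrix.det_apply]
  refine Submodule.sum_mem _ fun σ _ => ?_
  have hp : ∏ i, M (σ i) i ∈ I ^ n := by
    have := Ideal.prod_mem_prod (I := fun _ : Fin n => I) (s := Finset.univ)
      (x := fun i => M (σ i) i) (fun i _ => h _ _)
    simpa [Finset.prod_const] using this
  rw [Units.smul_def]
  exact zsmul_mem hp _

private lemma sign_cast_isUnit {A : Type*} [CommRing A] {m : Type*} [DecidableEq m] [Fintype m]
    (σ : Equiv.Perm m) : IsUnit (((Equiv.Perm.sign σ : ℤ) : A)) := by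
  rcases Int.units_eq_one_or (Equiv.Perm.sign σ) with h | h <;> rw [h] <;> simp

private lemma aux {A : Type*} [CommRing A] [IsLocalRing A] :
    ∀ n (γ : Matrix (Fin (n+1)) (Fin (n+1)) A),
      γ.det ∈ maximalIdeal A → γ.det ∉ (maximalIdeal A) ^ 2 →
      ∃ θ₁ θ₂ : Matrix (Fin (n+1)) (Fin (n+1)) A, ∃ d : A,
        IsUnit θ₁ ∧ IsUnit θ₂ ∧ Ideal.span {d} = Ideal.span {γ.det} ∧
        θ₁ * γ * θ₂ = Matrix.diagonal (fun i : Fin (n+1) => if (i : ℕ) = 0 then d else 1) := by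
  intro n
  induction n with
  | zero =>
    intro γ _ _
    refine ⟨1, 1, γ.det, isUnit_one, isUnit_one, rfl, ?_⟩
    rw [one_mul, mul_one]
    ext i j
    fin_cases i; fin_cases j
    simp [Matrix.det_fin_one]
  | succ n ih =>
    intro γ hdet₁ hdet₂
    classical
    -- there is a unit entry
    have hexist : ∃ i j, IsUnit (γ i j) := by
      by_contra h
      push_neg at h
      have hmem : ∀ i j, γ i j ∈ maximalIdeal A := fun i j =>
        (IsLocalRing.mem_maximalIdeal _).2 (h i j)
      have := det_mem_pow_of_entries γ _ hmem
      exact hdet₂ (Ideal.pow_le_pow_right (by omega) this)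
    obtain ⟨i, j, hu0⟩ := hexist
    set lst : Fin (n+2) := Fin.last (n+1) with hlst
    set sw₁ : Equiv.Perm (Fin (n+2)) := Equiv.swap i lst with hsw₁
    set sw₂ : Equiv.Perm (Fin (n+2)) := Equiv.swap j lst with hsw₂
    set γ₁ : Matrix (Fin (n+2)) (Fin (n+2)) A := γ.submatrix sw₁ sw₂ with hγ₁
    have hu : IsUnit (γ₁ lst lst) := by
      have h1 : γ₁ lst lst = γ i j := by
        simp [hγ₁, hsw₁, hsw₂, Equiv.swap_apply_right]
      rw [h1]; exact hu0
    set u : A := γ₁ lst lst with hu_def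
    set v : A := ↑hu.unit⁻¹ with hv
    have hvu : v * u = 1 := by
      rw [hv]
      exact_mod_cast hu.unit.inv_mul
    have huv : u * v = 1 := by
      rw [hv]
      exact_mod_cast hu.unit.mul_inv
    -- permutation matrices
    set P : Matrix (Fin (n+2)) (Fin (n+2)) A := (1 : Matrix _ _ A).submatrix sw₁ id with hP
    set Q : Matrix (Fin (n+2)) (Fin (n+2)) A := (1 : Matrix _ _ A).submatrix id sw₂ with hQ
    have hPγQ : P * γ * Q = γ₁ := by
      have h1 : P * γ = γ.submatrix sw₁ id := by
        have h := Matrix.submatrix_mul_equiv (1 : Matrix (Fin (n+2)) (Fin (n+2)) A) γ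
          sw₁ (Equiv.refl (Fin (n+2))) id
        simpa [hP] using h
      have h2 : γ.submatrix (⇑sw₁) id * Q = γ₁ := by
        have h := Matrix.submatrix_mul_equiv γ (1 : Matrix (Fin (n+2)) (Fin (n+2)) A)
          sw₁ (Equiv.refl (Fin (n+2))) sw₂
        simpa [hQ, hγ₁] using h
      rw [h1, h2]
    have hPunit : IsUnit P := by
      refine (Matrix.isUnit_iff_isUnit_det _).2 (Matrix.isUnit_det_of_right_inverse (B := (1 : Matrix _ _ A).submatrix id sw₁) ?_)
      have h := Matrix.submatrix_mul_equiv (1 : Matrix (Fin (n+2)) (Fin (n+2)) A)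
        (1 : Matrix (Fin (n+2)) (Fin (n+2)) A) sw₁ (Equiv.refl (Fin (n+2))) sw₁
      simpa [hP] using h
    have hQunit : IsUnit Q := by
      refine (Matrix.isUnit_iff_isUnit_det _).2 (Matrix.isUnit_det_of_left_inverse (B := (1 : Matrix _ _ A).submatrix sw₂ id) ?_)
      have h := Matrix.submatrix_mul_equiv (1 : Matrix (Fin (n+2)) (Fin (n+2)) A)
        (1 : Matrix (Fin (n+2)) (Fin (n+2)) A) sw₂ (Equiv.refl (Fin (n+2))) sw₂
      simpa [hQ] using h
    -- elimination matrices
    set N : Matrix (Fin (n+2)) (Fin (n+2)) A :=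
      Matrix.of (fun a b => if b = lst ∧ a ≠ lst then -(γ₁ a lst) * v else 0) with hN
    set L : Matrix (Fin (n+2)) (Fin (n+2)) A := 1 + N with hL
    set N' : Matrix (Fin (n+2)) (Fin (n+2)) A :=
      Matrix.of (fun a b => if a = lst ∧ b ≠ lst then -(v * γ₁ lst b) else 0) with hN'
    set R : Matrix (Fin (n+2)) (Fin (n+2)) A := 1 + N' with hR
    set C : Matrix (Fin (n+2)) (Fin (n+2)) A := L * γ₁ with hC
    have hCE : ∀ a jj, C a jj = γ₁ a jj + N a lst * γ₁ lst jj := by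
      intro a jj
      rw [hC, hL, Matrix.add_mul, Matrix.one_mul, Matrix.add_apply]
      congr 1
      rw [Matrix.mul_apply]
      refine Finset.sum_eq_single lst (fun b _ hb => ?_) (by simp)
      simp [hN, hb]
    have hCrow : ∀ jj, C lst jj = γ₁ lst jj := by
      intro jj
      rw [hCE]
      simp [hN]
    have hCcol : ∀ a, a ≠ lst → C a lst = 0 := by
      intro a ha
      rw [hCE]
      have h0 : N a lst = -(γ₁ a lst) * v := by simp [hN, ha]
      rw [h0, show γ₁ lst lst = u from hu_def.symm, neg_mul, neg_mul, mul_assoc, hvu, mul_one]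
      ring
    have hCcorner : C lst lst = u := hCrow lst
    set B : Matrix (Fin (n+2)) (Fin (n+2)) A := C * R with hB
    have hBE : ∀ a jj, B a jj = C a jj + C a lst * N' lst jj := by
      intro a jj
      rw [hB, hR, Matrix.mul_add, Matrix.mul_one, Matrix.add_apply]
      congr 1
      rw [Matrix.mul_apply]
      refine Finset.sum_eq_single lst (fun b _ hb => ?_) (by simp)
      simp [hN', hb]
    have hBcol : ∀ a, a ≠ lst → B a lst = 0 := by
      intro a ha
      rw [hBE, hCcol a ha]
      simp [hN']
    have hBrow : ∀ jj, jj ≠ lst → B lst jj = 0 := by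
      intro jj hjj
      rw [hBE, hCrow, hCcorner]
      have h0 : N' lst jj = -(v * γ₁ lst jj) := by simp [hN', hjj]
      rw [h0, mul_neg, ← mul_assoc, huv, one_mul]
      ring
    have hBcorner : B lst lst = u := by
      rw [hBE, hCcorner]
      simp [hN']
    -- L and R are unipotent triangular
    have hLdet : L.det = 1 := by
      rw [Matrix.det_of_upperTriangular]
      · refine Finset.prod_eq_one fun x _ => ?_
        simp [hL, hN, Matrix.one_apply]
      · intro a b hab
        simp only [id] at hab
        have hb : b ≠ lst := fun h => absurd hab (by rw [h, hlst]; exact not_lt.2 (Fin.le_last a))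
        rw [hL, Matrix.add_apply, Matrix.one_apply_ne (ne_of_gt hab)]
        simp [hN, hb]
    have hRdet : R.det = 1 := by
      rw [Matrix.det_of_lowerTriangular]
      · refine Finset.prod_eq_one fun x _ => ?_
        simp [hR, hN', Matrix.one_apply]
      · intro a b hab
        have hab' : a < b := hab
        have ha : a ≠ lst := fun h => absurd hab' (by rw [h, hlst]; exact not_lt.2 (Fin.le_last b))
        rw [hR, Matrix.add_apply, Matrix.one_apply_ne (ne_of_lt hab')]
        simp [hN', ha]
    have hLunit : IsUnit L := by
      rw [Matrix.isUnit_iff_isUnit_det, hLdet]; exact isUnit_one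
    have hRunit : IsUnit R := by
      rw [Matrix.isUnit_iff_isUnit_det, hRdet]; exact isUnit_one
    -- block decomposition of B
    set e : Fin (n+1) ⊕ Fin 1 ≃ Fin (n+2) := finSumFinEquiv with he
    have helast : e (Sum.inr 0) = lst := by
      rw [he, hlst]
      apply Fin.ext
      simp
    have hecast : ∀ k : Fin (n+1), e (Sum.inl k) = Fin.castSucc k := by
      intro k
      rw [he]
      apply Fin.ext
      simp
    set γ' : Matrix (Fin (n+1)) (Fin (n+1)) A :=
      B.submatrix Fin.castSucc Fin.castSucc with hγ'
    set U : Matrix (Fin 1) (Fin 1) A := Matrix.of (fun _ _ => u) with hU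
    have hBblock : B = (Matrix.fromBlocks γ' 0 0 U).submatrix e.symm e.symm := by
      ext a b
      obtain ⟨a', rfl⟩ := e.surjective a
      obtain ⟨b', rfl⟩ := e.surjective b
      rw [Matrix.submatrix_apply, Equiv.symm_apply_apply, Equiv.symm_apply_apply]
      rcases a' with k | x
      · rcases b' with l | y
        · simp [hγ', hecast]
        · have hy : y = 0 := Subsingleton.elim _ _
          subst hy
          rw [helast, hecast]
          simp [hBcol _ (Fin.castSucc_lt_last k).ne]
      · have hx : x = 0 := Subsingleton.elim _ _
        subst hx
        rcases b' with l | y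
        · rw [helast, hecast]
          simp [hBrow _ (Fin.castSucc_lt_last l).ne, (Fin.castSucc_lt_last l).ne']
        · have hy : y = 0 := Subsingleton.elim _ _
          subst hy
          rw [helast]
          simp [hBcorner, hU]
    -- determinant bookkeeping
    set ε : A := ((Equiv.Perm.sign sw₁ : ℤ) : A) * ((Equiv.Perm.sign sw₂ : ℤ) : A) with hε
    have hεunit : IsUnit ε := (sign_cast_isUnit sw₁).mul (sign_cast_isUnit sw₂)
    have hγ₁det : γ₁.det = ε * γ.det := by
      have h1 : γ₁ = (γ.submatrix id sw₂).submatrix sw₁ id := by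
        rw [hγ₁, Matrix.submatrix_submatrix]
        rfl
      rw [h1, Matrix.det_permute, Matrix.det_permute', hε]
      push_cast
      ring
    have hBdet : B.det = ε * γ.det := by
      rw [hB, hC, Matrix.det_mul, Matrix.det_mul, hLdet, hRdet, one_mul, mul_one, hγ₁det]
    have hBdet' : B.det = γ'.det * u := by
      rw [hBblock, Matrix.det_submatrix_equiv_self, Matrix.det_fromBlocks_zero₂₁,
        Matrix.det_fin_one]
      rfl
    have hγ'det : γ'.det = (ε * v) * γ.det := by
      have h1 : γ'.det * u = ε * γ.det := by rw [← hBdet', hBdet]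
      calc γ'.det = γ'.det * (u * v) := by rw [huv, mul_one]
        _ = (γ'.det * u) * v := by ring
        _ = (ε * γ.det) * v := by rw [h1]
        _ = (ε * v) * γ.det := by ring
    obtain ⟨w, hw⟩ : IsUnit (ε * v) := hεunit.mul (hu.unit⁻¹).isUnit
    have hdetinv : γ.det = ↑w⁻¹ * γ'.det := by
      rw [hγ'det, ← hw, ← mul_assoc, Units.inv_mul, one_mul]
    have hγ'mem : γ'.det ∈ maximalIdeal A := by
      rw [hγ'det]
      exact Ideal.mul_mem_left _ _ hdet₁
    have hγ'nmem : γ'.det ∉ (maximalIdeal A) ^ 2 := by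
      intro hmem
      apply hdet₂
      rw [hdetinv]
      exact Ideal.mul_mem_left _ _ hmem
    obtain ⟨θ₁', θ₂', d, hθ₁', hθ₂', hspan', hdiag'⟩ := ih γ' hγ'mem hγ'nmem
    -- assemble
    set V : Matrix (Fin 1) (Fin 1) A := Matrix.of (fun _ _ => v) with hV
    set Θ₁ : Matrix (Fin (n+2)) (Fin (n+2)) A :=
      (Matrix.fromBlocks θ₁' 0 0 V).submatrix e.symm e.symm with hΘ₁
    set Θ₂ : Matrix (Fin (n+2)) (Fin (n+2)) A :=
      (Matrix.fromBlocks θ₂' 0 0 1).submatrix e.symm e.symm with hΘ₂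
    have hΘ₁unit : IsUnit Θ₁ := by
      rw [Matrix.isUnit_iff_isUnit_det, hΘ₁, Matrix.det_submatrix_equiv_self,
        Matrix.det_fromBlocks_zero₂₁, Matrix.det_fin_one]
      exact ((Matrix.isUnit_iff_isUnit_det _).1 hθ₁').mul (hu.unit⁻¹).isUnit
    have hΘ₂unit : IsUnit Θ₂ := by
      rw [Matrix.isUnit_iff_isUnit_det, hΘ₂, Matrix.det_submatrix_equiv_self,
        Matrix.det_fromBlocks_zero₂₁, Matrix.det_one]
      exact ((Matrix.isUnit_iff_isUnit_det _).1 hθ₂').mul isUnit_one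
    have hVU : V * U = 1 := by
      ext a b
      have ha : a = 0 := Subsingleton.elim _ _
      have hb : b = 0 := Subsingleton.elim _ _
      subst ha; subst hb
      simp [Matrix.mul_apply, hV, hU, hvu, Matrix.one_apply]
    have hdvd1 : γ.det ∣ γ'.det := ⟨ε * v, by rw [hγ'det]; ring⟩
    have hdvd2 : γ'.det ∣ γ.det := ⟨↑w⁻¹, by rw [hdetinv]; ring⟩
    clear_value Θ₂ Θ₁ V U γ' e B C R N' L N Q P v u γ₁ sw₂ sw₁ lst ε
    refine ⟨Θ₁ * L * P, Q * R * Θ₂, d, (hΘ₁unit.mul hLunit).mul hPunit,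
      (hQunit.mul hRunit).mul hΘ₂unit, ?_, ?_⟩
    · rw [hspan']
      exact le_antisymm (Ideal.span_singleton_le_span_singleton.2 hdvd1)
        (Ideal.span_singleton_le_span_singleton.2 hdvd2)
    · have key : Θ₁ * L * P * γ * (Q * R * Θ₂) = Θ₁ * B * Θ₂ := by
        rw [hB, hC, ← hPγQ]
        simp only [Matrix.mul_assoc]
      rw [key, hBblock, hΘ₁, hΘ₂]
      rw [Matrix.submatrix_mul_equiv _ _ _ e.symm _, Matrix.submatrix_mul_equiv _ _ _ e.symm _]
      rw [Matrix.fromBlocks_multiply, Matrix.fromBlocks_multiply]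
      simp only [Matrix.mul_zero, Matrix.zero_mul, add_zero, zero_add, Matrix.mul_one,
        hVU, hdiag']
      rw [← Matrix.diagonal_one, Matrix.fromBlocks_diagonal, Matrix.submatrix_diagonal_equiv]
      refine congrArg Matrix.diagonal (funext fun x => ?_)
      obtain ⟨y, rfl⟩ := e.surjective x
      rcases y with k | z
      · simp only [Function.comp_apply, Equiv.symm_apply_apply, Sum.elim_inl]
        rw [hecast]
        simp
      · have hz : z = 0 := Subsingleton.elim _ _
        subst hz
        simp only [Function.comp_apply, Equiv.symm_apply_apply, Sum.elim_inr]
        rw [helast, hlst]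
        simp [Fin.val_last]

/-- **Lemma 5.5 (ii).** Let `A` be a (Noetherian) local ring with maximal ideal `M` and let
`γ` be an `n × n` matrix with `det(γ) ∈ M \ M²`. Then there are invertible matrices `θ₁, θ₂`
and an element `d` with `dA = det(γ)A` such that `θ₁·γ·θ₂ = diag(d, 1, …, 1)`. -/
theorem stmt_17 {A : Type*} [CommRing A] [IsNoetherianRing A] [IsLocalRing A]
    {n : ℕ} (γ : Matrix (Fin n) (Fin n) A)
    (hdet₁ : γ.det ∈ maximalIdeal A) (hdet₂ : γ.det ∉ (maximalIdeal A) ^ 2) :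
    ∃ θ₁ θ₂ : Matrix (Fin n) (Fin n) A, ∃ d : A,
      IsUnit θ₁ ∧ IsUnit θ₂ ∧ Ideal.span {d} = Ideal.span {γ.det} ∧
      θ₁ * γ * θ₂ = Matrix.diagonal (fun i : Fin n => if (i : ℕ) = 0 then d else 1) := by
  cases n with
  | zero =>
    exfalso
    rw [Matrix.det_isEmpty] at hdet₁
    exact (IsLocalRing.maximalIdeal.isMaximal A).ne_top (Ideal.eq_top_of_isUnit_mem _ hdet₁ isUnit_one)
  | succ m => exact aux m γ hdet₁ hdet₂
end
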